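/- arXiv:2002.01590 — 5 statements merged into one kernel-verified Lean document; each statement's English description precedes it below -/
import Mathlib

section
/- The quantum statistical complexity measure is sub-additive over copies: for every N×N density matrix ρ (N ≥ 2) and every n ≥ 1, C(ρ^⊗n) ≤ n·C(ρ), where ρ^⊗n denotes the n-fold Kronecker (tensor) product of ρ with itself, an N^n × N^n density matrix. -/
open Matrix BigOperators Kronecker ComplexOrder

noncomputable def vNEntropy {m : Type*} [Fintype m] [DecidableEq m]
    (ρ : Matrix m m ℂ) : ℝ :=
  if h : ρ.IsHermitian then -∑ i, h.eigenvalues i * Real.log (h.eigenvalues i) else 0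

noncomputable def traceNorm {m : Type*} [Fintype m] [DecidableEq m]
    (A : Matrix m m ℂ) : ℝ :=
  if h : A.IsHermitian then ∑ i, |h.eigenvalues i| else 0

noncomputable def mmix (m : Type*) [Fintype m] [DecidableEq m] : Matrix m m ℂ :=
  ((Fintype.card m : ℂ))⁻¹ • 1

noncomputable def diseq {m : Type*} [Fintype m] [DecidableEq m]
    (ρ : Matrix m m ℂ) : ℝ := (1/2) * traceNorm (ρ - mmix m)

noncomputable def qscm {m : Type*} [Fintype m] [DecidableEq m]
    (ρ : Matrix m m ℂ) : ℝ :=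
  vNEntropy ρ * diseq ρ / Real.log (Fintype.card m)

noncomputable def kronPow {N : ℕ} (ρ : Matrix (Fin N) (Fin N) ℂ) (n : ℕ) :
    Matrix (Fin n → Fin N) (Fin n → Fin N) ℂ :=
  fun x y => ∏ i, ρ (x i) (y i)


open Polynomial

lemma kronPow_mul {N : ℕ} (A B : Matrix (Fin N) (Fin N) ℂ) (n : ℕ) :
    kronPow A n * kronPow B n = kronPow (A * B) n := by
  ext x y
  simp only [kronPow, Matrix.mul_apply]
  rw [Fintype.prod_sum (fun i k => A (x i) k * B k (y i))]
  congr 1; ext z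
  rw [Finset.prod_mul_distrib]

lemma kronPow_one {N n : ℕ} : kronPow (1 : Matrix (Fin N) (Fin N) ℂ) n = 1 := by
  ext x y
  simp only [kronPow, Matrix.one_apply, Finset.prod_boole]
  simp [funext_iff]

lemma kronPow_conjTranspose {N : ℕ} (A : Matrix (Fin N) (Fin N) ℂ) (n : ℕ) :
    (kronPow A n)ᴴ = kronPow Aᴴ n := by
  ext x y
  simp [kronPow, Matrix.conjTranspose_apply, map_prod]

lemma kronPow_diagonal {N : ℕ} (d : Fin N → ℂ) (n : ℕ) :
    kronPow (Matrix.diagonal d) n = Matrix.diagonal (fun x => ∏ i, d (x i)) := by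
  ext x y
  by_cases h : x = y
  · subst h; simp [kronPow, Matrix.diagonal_apply_eq]
  · rw [Matrix.diagonal_apply_ne _ h]
    obtain ⟨i, hi⟩ := Function.ne_iff.mp h
    exact Finset.prod_eq_zero (Finset.mem_univ i) (Matrix.diagonal_apply_ne _ hi)

lemma my_charpoly_conj {m : Type*} [Fintype m] [DecidableEq m]
    (U A V : Matrix m m ℂ) (h1 : U * V = 1) :
    (U * A * V).charpoly = A.charpoly := by
  have hmapUV : U.map (C : ℂ →+* ℂ[X]) * V.map C = 1 := by
    rw [← Matrix.map_mul, h1, Matrix.map_one _ (map_zero _) (map_one _)]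
  have hch : charmatrix (U * A * V)
      = U.map (C : ℂ →+* ℂ[X]) * charmatrix A * V.map C := by
    unfold charmatrix
    rw [Matrix.mul_sub, Matrix.sub_mul]
    congr 1
    · rw [Matrix.scalar_apply, ← Matrix.smul_one_eq_diagonal, Matrix.mul_smul,
        Matrix.smul_mul, mul_one, hmapUV]
    · simp only [RingHom.mapMatrix_apply]
      rw [← Matrix.map_mul, ← Matrix.map_mul]
  unfold Matrix.charpoly
  rw [hch, Matrix.det_mul, Matrix.det_mul, mul_comm (U.map C).det, mul_assoc,
    ← Matrix.det_mul, hmapUV, Matrix.det_one, mul_one]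

lemma my_charpoly_diagonal {m : Type*} [Fintype m] [DecidableEq m] (d : m → ℂ) :
    (Matrix.diagonal d).charpoly = ∏ i, (X - C (d i)) := by
  have : charmatrix (Matrix.diagonal d) = Matrix.diagonal (fun i => X - C (d i)) := by
    ext i j
    by_cases h : i = j
    · subst h; simp [charmatrix_apply_eq]
    · rw [charmatrix_apply_ne _ _ _ h, Matrix.diagonal_apply_ne _ h]
      simp [Matrix.diagonal_apply_ne _ h]
  rw [Matrix.charpoly, this, Matrix.det_diagonal]

/-- Transfer sums of a function of eigenvalues through an explicit unitary diagonalization. -/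
lemma sum_g_eigenvalues {m : Type*} [Fintype m] [DecidableEq m]
    {B U : Matrix m m ℂ} {d : m → ℝ}
    (h1 : U * Uᴴ = 1)
    (hB : B = U * Matrix.diagonal (Complex.ofReal ∘ d) * Uᴴ)
    (hherm : B.IsHermitian) (g : ℝ → ℝ) :
    ∑ i, g (hherm.eigenvalues i) = ∑ i, g (d i) := by
  have hc1 : B.charpoly = ∏ i, (X - C ((d i : ℂ))) := by
    rw [hB, my_charpoly_conj _ _ _ h1, my_charpoly_diagonal]
    rfl
  have hc2 : B.charpoly = ∏ i, (X - C ((hherm.eigenvalues i : ℂ))) := by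
    have hu : (hherm.eigenvectorUnitary : Matrix m m ℂ) *
        (hherm.eigenvectorUnitary : Matrix m m ℂ)ᴴ = 1 :=
      Matrix.mem_unitaryGroup_iff.mp hherm.eigenvectorUnitary.2
    conv_lhs => rw [hherm.spectral_theorem]
    rw [Unitary.conjStarAlgAut_apply, Matrix.star_eq_conjTranspose, my_charpoly_conj _ _ _ hu, my_charpoly_diagonal]
    rfl
  -- multiset equality
  have hmult : (Finset.univ.val.map (fun i => ((d i : ℂ)))) =
      (Finset.univ.val.map (fun i => ((hherm.eigenvalues i : ℂ)))) := by
    have := hc1.symm.trans hc2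
    have h1' : ((Finset.univ.val.map (fun i => ((d i : ℂ)))).map
        (fun z => X - C z)).prod = ∏ i, (X - C ((d i : ℂ))) := by
      rw [Multiset.map_map]; rfl
    have h2' : ((Finset.univ.val.map (fun i => ((hherm.eigenvalues i : ℂ)))).map
        (fun z => X - C z)).prod = ∏ i, (X - C ((hherm.eigenvalues i : ℂ))) := by
      rw [Multiset.map_map]; rfl
    calc Finset.univ.val.map (fun i => ((d i : ℂ)))
        = (((Finset.univ.val.map (fun i => ((d i : ℂ)))).map
            (fun z => X - C z)).prod).roots := (roots_multiset_prod_X_sub_C _).symm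
      _ = (((Finset.univ.val.map (fun i => ((hherm.eigenvalues i : ℂ)))).map
            (fun z => X - C z)).prod).roots := by rw [h1', h2', this]
      _ = _ := roots_multiset_prod_X_sub_C _
  have e1 : ∀ (f : m → ℝ),
      ((Finset.univ.val.map (fun i => ((f i : ℂ)))).map (fun z => g z.re)).sum
        = ∑ i, g (f i) := by
    intro f
    rw [Multiset.map_map]
    simp only [Function.comp, Complex.ofReal_re]
    rw [Finset.sum_eq_multiset_sum]
  rw [← e1, ← e1, hmult]

lemma entropy_pow {N : ℕ} (lam : Fin N → ℝ) (h0 : ∀ i, 0 ≤ lam i)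
    (h1 : ∑ i, lam i = 1) (n : ℕ) :
    -∑ x : Fin n → Fin N, (∏ i, lam (x i)) * Real.log (∏ i, lam (x i))
      = n * (-∑ k, lam k * Real.log (lam k)) := by
  have hpt : ∀ x : Fin n → Fin N,
      (∏ i, lam (x i)) * Real.log (∏ i, lam (x i))
        = ∑ j, (∏ i, lam (x i)) * Real.log (lam (x j)) := by
    intro x
    by_cases hz : ∀ i, lam (x i) ≠ 0
    · rw [Real.log_prod (fun i _ => hz i), Finset.mul_sum]
    · push_neg at hz
      obtain ⟨i0, hi0⟩ := hz
      have hp : (∏ i, lam (x i)) = 0 := Finset.prod_eq_zero (Finset.mem_univ i0) hi0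
      simp [hp]
  rw [Finset.sum_congr rfl (fun x _ => hpt x), Finset.sum_comm]
  have hin : ∀ j : Fin n,
      ∑ x : Fin n → Fin N, (∏ i, lam (x i)) * Real.log (lam (x j))
        = ∑ k, lam k * Real.log (lam k) := by
    intro j
    have hF : ∀ x : Fin n → Fin N,
        (∏ i, lam (x i)) * Real.log (lam (x j))
          = ∏ i, (if i = j then lam (x i) * Real.log (lam (x i)) else lam (x i)) := by
      intro x
      rw [← Finset.mul_prod_erase Finset.univ _ (Finset.mem_univ j),
        ← Finset.mul_prod_erase Finset.univ
          (fun i => if i = j then lam (x i) * Real.log (lam (x i)) else lam (x i))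
          (Finset.mem_univ j), if_pos rfl]
      rw [Finset.prod_congr rfl (fun i hi => if_neg (Finset.ne_of_mem_erase hi))]
      ring
    rw [Finset.sum_congr rfl (fun x _ => hF x),
      ← Fintype.prod_sum (fun i k => if i = j then lam k * Real.log (lam k) else lam k)]
    have : ∀ i : Fin n, (∑ k, if i = j then lam k * Real.log (lam k) else lam k)
        = if i = j then ∑ k, lam k * Real.log (lam k) else 1 := by
      intro i
      by_cases h : i = j <;> simp [h, h1]
    rw [Finset.prod_congr rfl (fun i _ => this i),
      Finset.prod_ite_eq' Finset.univ j (fun _ => ∑ k, lam k * Real.log (lam k))]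
    simp
  rw [Finset.sum_congr rfl (fun j _ => hin j)]
  simp [Finset.sum_const, mul_comm]

lemma diseq_pow {N : ℕ} (hN : 1 ≤ N) (lam : Fin N → ℝ) (h0 : ∀ i, 0 ≤ lam i)
    (h1 : ∑ i, lam i = 1) (n : ℕ) :
    ∑ x : Fin n → Fin N, |(∏ i, lam (x i)) - ((N : ℝ)⁻¹) ^ n|
      ≤ n * ∑ k, |lam k - (N : ℝ)⁻¹| := by
  induction n with
  | zero => simp
  | succ n ih =>
    have hNpos : (0 : ℝ) < N := by positivity
    have e := Fintype.sum_equiv (Fin.consEquiv (fun _ => Fin N)).symm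
      (fun x : Fin (n+1) → Fin N => |(∏ i, lam (x i)) - ((N : ℝ)⁻¹) ^ (n+1)|)
      (fun p : Fin N × (Fin n → Fin N) =>
        |lam p.1 * (∏ i, lam (p.2 i)) - (N : ℝ)⁻¹ * ((N : ℝ)⁻¹) ^ n|)
      (by
        intro x
        rw [Fin.prod_univ_succ, pow_succ']
        rfl)
    rw [e, Fintype.sum_prod_type]
    have step : ∀ (k : Fin N) (y : Fin n → Fin N),
        |lam k * (∏ i, lam (y i)) - (N : ℝ)⁻¹ * ((N : ℝ)⁻¹) ^ n|
          ≤ lam k * |(∏ i, lam (y i)) - ((N : ℝ)⁻¹) ^ n|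
            + ((N : ℝ)⁻¹) ^ n * |lam k - (N : ℝ)⁻¹| := by
      intro k y
      have hsplit : lam k * (∏ i, lam (y i)) - (N : ℝ)⁻¹ * ((N : ℝ)⁻¹) ^ n
          = lam k * ((∏ i, lam (y i)) - ((N : ℝ)⁻¹) ^ n)
            + ((N : ℝ)⁻¹) ^ n * (lam k - (N : ℝ)⁻¹) := by ring
      calc |lam k * (∏ i, lam (y i)) - (N : ℝ)⁻¹ * ((N : ℝ)⁻¹) ^ n|
          ≤ |lam k * ((∏ i, lam (y i)) - ((N : ℝ)⁻¹) ^ n)|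
            + |((N : ℝ)⁻¹) ^ n * (lam k - (N : ℝ)⁻¹)| := by
            rw [hsplit]; exact abs_add_le _ _
        _ = lam k * |(∏ i, lam (y i)) - ((N : ℝ)⁻¹) ^ n|
            + ((N : ℝ)⁻¹) ^ n * |lam k - (N : ℝ)⁻¹| := by
            rw [abs_mul, abs_mul, abs_of_nonneg (h0 k),
              abs_of_nonneg (pow_nonneg (inv_nonneg.mpr hNpos.le) n)]
    have hcard : (Fintype.card (Fin n → Fin N) : ℝ) * ((N : ℝ)⁻¹) ^ n = 1 := by
      rw [Fintype.card_fun, Fintype.card_fin, Fintype.card_fin]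
      push_cast
      rw [inv_pow, mul_inv_cancel₀ (by positivity)]
    calc ∑ k, ∑ y : Fin n → Fin N,
          |lam k * (∏ i, lam (y i)) - (N : ℝ)⁻¹ * ((N : ℝ)⁻¹) ^ n|
        ≤ ∑ k, ∑ y : Fin n → Fin N,
          (lam k * |(∏ i, lam (y i)) - ((N : ℝ)⁻¹) ^ n|
            + ((N : ℝ)⁻¹) ^ n * |lam k - (N : ℝ)⁻¹|) := by
          exact Finset.sum_le_sum fun k _ => Finset.sum_le_sum fun y _ => step k y
      _ = (∑ k, lam k) * (∑ y : Fin n → Fin N, |(∏ i, lam (y i)) - ((N : ℝ)⁻¹) ^ n|)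
          + ((Fintype.card (Fin n → Fin N) : ℝ) * ((N : ℝ)⁻¹) ^ n)
            * ∑ k, |lam k - (N : ℝ)⁻¹| := by
          simp only [Finset.sum_add_distrib, ← Finset.mul_sum, Finset.sum_const,
            Finset.card_univ, nsmul_eq_mul, ← Finset.sum_mul]
          ring
      _ ≤ 1 * ((n : ℝ) * ∑ k, |lam k - (N : ℝ)⁻¹|) + 1 * ∑ k, |lam k - (N : ℝ)⁻¹| := by
          rw [h1, hcard]
          simp only [one_mul]
          have hT : (0:ℝ) ≤ ∑ k, |lam k - (N : ℝ)⁻¹| :=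
            Finset.sum_nonneg fun k _ => abs_nonneg _
          linarith [ih]
      _ = (↑(n + 1) : ℝ) * ∑ k, |lam k - (N : ℝ)⁻¹| := by push_cast; ring

lemma isHermitian_conj_diag {m : Type*} [Fintype m] [DecidableEq m]
    (U : Matrix m m ℂ) (d : m → ℝ) :
    (U * Matrix.diagonal (Complex.ofReal ∘ d) * Uᴴ).IsHermitian := by
  unfold Matrix.IsHermitian
  rw [Matrix.conjTranspose_mul, Matrix.conjTranspose_mul, Matrix.conjTranspose_conjTranspose,
    Matrix.diagonal_conjTranspose]
  have h : star (Complex.ofReal ∘ d) = Complex.ofReal ∘ d := by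
    ext i; simp [Complex.conj_ofReal]
  rw [h, ← mul_assoc]

lemma final_arith (S T TK L : ℝ) (n : ℕ) (hn : 1 ≤ n) (hS : 0 ≤ S) (hL : 0 < L)
    (hTK0 : 0 ≤ TK) (hTK : TK ≤ n * T) :
    ((n : ℝ) * S) * (1/2 * TK) / ((n : ℝ) * L) ≤ (n : ℝ) * (S * (1/2 * T) / L) := by
  have hn' : (0:ℝ) < n := by exact_mod_cast Nat.lt_of_lt_of_le Nat.zero_lt_one hn
  have e1 : ((n : ℝ) * S) * (1/2 * TK) / ((n : ℝ) * L) = S * TK / (2 * L) := by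
    field_simp
  have e2 : (n : ℝ) * (S * (1/2 * T) / L) = ((n : ℝ) * (S * T)) / (2 * L) := by
    field_simp
  rw [e1, e2]
  gcongr ?_ / _
  nlinarith [mul_nonneg hS (sub_nonneg.mpr hTK)]


/-- QSCM is sub-additive over copies. -/
theorem qscm_subadditive_copies {N : ℕ} (hN : 2 ≤ N)
    (ρ : Matrix (Fin N) (Fin N) ℂ) (hρ : ρ.PosSemidef) (htr : ρ.trace = 1)
    (n : ℕ) (hn : 1 ≤ n) :
    qscm (kronPow ρ n) ≤ (n : ℝ) * qscm ρ := by
  have hH : ρ.IsHermitian := hρ.1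
  have hU1 : (hH.eigenvectorUnitary : Matrix (Fin N) (Fin N) ℂ)
      * (hH.eigenvectorUnitary : Matrix (Fin N) (Fin N) ℂ)ᴴ = 1 :=
    Matrix.mem_unitaryGroup_iff.mp hH.eigenvectorUnitary.2
  have hspec : ρ = (hH.eigenvectorUnitary : Matrix (Fin N) (Fin N) ℂ)
      * Matrix.diagonal (Complex.ofReal ∘ hH.eigenvalues)
      * (hH.eigenvectorUnitary : Matrix (Fin N) (Fin N) ℂ)ᴴ := hH.spectral_theorem
  have hlam0 : ∀ i, 0 ≤ hH.eigenvalues i := fun i => hρ.eigenvalues_nonneg i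
  have hNpos : (0:ℝ) < N := by
    have : 0 < N := lt_of_lt_of_le (by norm_num) hN
    exact_mod_cast this
  have hlam1 : ∑ i, hH.eigenvalues i = 1 := by
    have ht : ρ.trace = ((∑ i, hH.eigenvalues i : ℝ) : ℂ) := by
      conv_lhs => rw [hspec]
      rw [Matrix.trace_mul_cycle]
      have hU2 : (hH.eigenvectorUnitary : Matrix (Fin N) (Fin N) ℂ)ᴴ
          * (hH.eigenvectorUnitary : Matrix (Fin N) (Fin N) ℂ) = 1 :=
        Matrix.mem_unitaryGroup_iff'.mp hH.eigenvectorUnitary.2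
      rw [hU2, one_mul, Matrix.trace_diagonal]
      push_cast
      rfl
    rw [htr] at ht
    exact_mod_cast ht.symm
  -- entropy of ρ
  have hSρ : vNEntropy ρ = -∑ k, hH.eigenvalues k * Real.log (hH.eigenvalues k) := by
    unfold vNEntropy
    rw [dif_pos hH]
  -- trace norm of ρ - mmix
  have hsubρ : ρ - mmix (Fin N)
      = (hH.eigenvectorUnitary : Matrix (Fin N) (Fin N) ℂ)
        * Matrix.diagonal (Complex.ofReal ∘ (fun k => hH.eigenvalues k - (N : ℝ)⁻¹))
        * (hH.eigenvectorUnitary : Matrix (Fin N) (Fin N) ℂ)ᴴ := by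
    have hmmN : mmix (Fin N) = ((N:ℂ))⁻¹ • 1 := by
      unfold mmix
      norm_num
    rw [hmmN]
    conv_lhs => rw [hspec]
    have h1' : ((N:ℂ))⁻¹ • (1 : Matrix (Fin N) (Fin N) ℂ)
        = (hH.eigenvectorUnitary : Matrix (Fin N) (Fin N) ℂ)
          * (((N:ℂ))⁻¹ • (1 : Matrix (Fin N) (Fin N) ℂ))
          * (hH.eigenvectorUnitary : Matrix (Fin N) (Fin N) ℂ)ᴴ := by
      rw [Matrix.mul_smul, mul_one, Matrix.smul_mul, hU1]
    rw [h1', ← Matrix.sub_mul, ← Matrix.mul_sub]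
    congr 2
    rw [Matrix.smul_one_eq_diagonal, Matrix.diagonal_sub]
    refine congrArg Matrix.diagonal (funext fun k => ?_)
    simp only [Function.comp_apply]
    push_cast
    ring
  have hhermρsub : (ρ - mmix (Fin N)).IsHermitian := by
    rw [hsubρ]; exact isHermitian_conj_diag _ _
  have hTρ : traceNorm (ρ - mmix (Fin N)) = ∑ k, |hH.eigenvalues k - (N : ℝ)⁻¹| := by
    unfold traceNorm
    rw [dif_pos hhermρsub]
    have h2 := sum_g_eigenvalues hU1 hsubρ hhermρsub (fun t => |t|)
    simpa using h2
  -- kron power facts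
  have hUn1 : kronPow (hH.eigenvectorUnitary : Matrix (Fin N) (Fin N) ℂ) n
      * (kronPow (hH.eigenvectorUnitary : Matrix (Fin N) (Fin N) ℂ) n)ᴴ = 1 := by
    rw [kronPow_conjTranspose, kronPow_mul, hU1, kronPow_one]
  have hKspec : kronPow ρ n
      = kronPow (hH.eigenvectorUnitary : Matrix (Fin N) (Fin N) ℂ) n
        * Matrix.diagonal (Complex.ofReal ∘ (fun x : Fin n → Fin N => ∏ i, hH.eigenvalues (x i)))
        * (kronPow (hH.eigenvectorUnitary : Matrix (Fin N) (Fin N) ℂ) n)ᴴ := by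
    conv_lhs => rw [hspec]
    rw [← kronPow_mul, ← kronPow_mul, kronPow_diagonal, ← kronPow_conjTranspose]
    congr 2
    refine congrArg Matrix.diagonal (funext fun x => ?_)
    simp only [Function.comp_apply]
    push_cast
    ring
  have hhermK : (kronPow ρ n).IsHermitian := by
    rw [hKspec]; exact isHermitian_conj_diag _ _
  have hSK : vNEntropy (kronPow ρ n)
      = (n : ℝ) * (-∑ k, hH.eigenvalues k * Real.log (hH.eigenvalues k)) := by
    unfold vNEntropy
    rw [dif_pos hhermK]
    have h2 : (∑ i, hhermK.eigenvalues i * Real.log (hhermK.eigenvalues i))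
        = ∑ x : Fin n → Fin N,
            (∏ i, hH.eigenvalues (x i)) * Real.log (∏ i, hH.eigenvalues (x i)) := by
      simpa using sum_g_eigenvalues hUn1 hKspec hhermK (fun t => t * Real.log t)
    rw [h2, entropy_pow hH.eigenvalues hlam0 hlam1 n]
  have hcardF : (Fintype.card (Fin n → Fin N)) = N ^ n := by
    simp [Fintype.card_fun]
  have hsubK : kronPow ρ n - mmix (Fin n → Fin N)
      = kronPow (hH.eigenvectorUnitary : Matrix (Fin N) (Fin N) ℂ) n
        * Matrix.diagonal (Complex.ofReal ∘ (fun x : Fin n → Fin N =>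
            (∏ i, hH.eigenvalues (x i)) - ((N : ℝ)⁻¹) ^ n))
        * (kronPow (hH.eigenvectorUnitary : Matrix (Fin N) (Fin N) ℂ) n)ᴴ := by
    have hmmK : mmix (Fin n → Fin N) = (((((N : ℝ)⁻¹) ^ n : ℝ) : ℂ)) • 1 := by
      unfold mmix
      rw [hcardF]
      congr 1
      push_cast
      rw [inv_pow]
    rw [hmmK]
    conv_lhs => rw [hKspec]
    have h1' : (((((N : ℝ)⁻¹) ^ n : ℝ) : ℂ)) • (1 : Matrix (Fin n → Fin N) (Fin n → Fin N) ℂ)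
        = kronPow (hH.eigenvectorUnitary : Matrix (Fin N) (Fin N) ℂ) n
          * ((((((N : ℝ)⁻¹) ^ n : ℝ) : ℂ)) • 1)
          * (kronPow (hH.eigenvectorUnitary : Matrix (Fin N) (Fin N) ℂ) n)ᴴ := by
      rw [Matrix.mul_smul, mul_one, Matrix.smul_mul, hUn1]
    rw [h1', ← Matrix.sub_mul, ← Matrix.mul_sub]
    congr 2
    rw [Matrix.smul_one_eq_diagonal, Matrix.diagonal_sub]
    refine congrArg Matrix.diagonal (funext fun x => ?_)
    simp only [Function.comp_apply]
    push_cast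
    ring
  have hhermKsub : (kronPow ρ n - mmix (Fin n → Fin N)).IsHermitian := by
    rw [hsubK]; exact isHermitian_conj_diag _ _
  have hTK : traceNorm (kronPow ρ n - mmix (Fin n → Fin N))
      = ∑ x : Fin n → Fin N, |(∏ i, hH.eigenvalues (x i)) - ((N : ℝ)⁻¹) ^ n| := by
    unfold traceNorm
    rw [dif_pos hhermKsub]
    have h2 := sum_g_eigenvalues hUn1 hsubK hhermKsub (fun t => |t|)
    simpa using h2
  -- nonnegativity facts
  have hS0 : 0 ≤ -∑ k, hH.eigenvalues k * Real.log (hH.eigenvalues k) := by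
    rw [neg_nonneg]
    apply Finset.sum_nonpos
    intro k _
    have hk1 : hH.eigenvalues k ≤ 1 := by
      rw [← hlam1]
      exact Finset.single_le_sum (fun i _ => hlam0 i) (Finset.mem_univ k)
    nlinarith [Real.log_nonpos (hlam0 k) hk1, hlam0 k]
  have hTK0 : 0 ≤ ∑ x : Fin n → Fin N, |(∏ i, hH.eigenvalues (x i)) - ((N : ℝ)⁻¹) ^ n| :=
    Finset.sum_nonneg fun x _ => abs_nonneg _
  have hlogN : (0:ℝ) < Real.log N := by
    apply Real.log_pos
    exact_mod_cast lt_of_lt_of_le (by norm_num) hN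
  have hlogK : Real.log (Fintype.card (Fin n → Fin N)) = (n : ℝ) * Real.log N := by
    rw [hcardF]
    push_cast
    exact Real.log_pow _ _
  have hDbound := diseq_pow (le_trans (by norm_num) hN) hH.eigenvalues hlam0 hlam1 n
  unfold qscm diseq
  rw [hSρ, hSK, hTρ, hTK, hlogK, Fintype.card_fin]
  exact final_arith _ _ _ _ n hn hS0 hlogN hTK0 hDbound
end

section
/- Extension by a maximally mixed state: for every N×N density matrix ρ (N ≥ 2), the quantum statistical complexity of the N²×N² density matrix ρ ⊗ (I/N) satisfies C(ρ ⊗ (I/N)) = (S(ρ) + log N)/(2 log N) · D(ρ, I/N) = C(ρ)/2 + D(ρ, I/N)/2. -/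
open Matrix BigOperators Kronecker ComplexOrder

section Aux
open Polynomial

lemma myCharpolyConj {n : Type*} [Fintype n] [DecidableEq n]
    (V W B : Matrix n n ℂ) (h1 : V * W = 1) :
    (V * B * W).charpoly = B.charpoly := by
  have hd : (Matrix.diagonal (fun _ : n => (X : ℂ[X]))) = (X : ℂ[X]) • (1 : Matrix n n ℂ[X]) := by
    rw [Matrix.smul_eq_diagonal_mul, mul_one]
  have key : charmatrix (V * B * W) =
      V.map (C : ℂ →+* ℂ[X]) * charmatrix B * W.map (C : ℂ →+* ℂ[X]) := by
    unfold charmatrix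
    rw [RingHom.mapMatrix_apply, RingHom.mapMatrix_apply, Matrix.scalar_apply, hd]
    rw [Matrix.mul_sub, Matrix.sub_mul]
    congr 1
    · rw [Matrix.mul_smul, mul_one, Matrix.smul_mul, ← Matrix.map_mul, h1,
        Matrix.map_one _ (map_zero C) (map_one C)]
    · rw [← Matrix.map_mul, ← Matrix.map_mul]
  have hdet : (V.map (C : ℂ →+* ℂ[X])).det * (W.map (C : ℂ →+* ℂ[X])).det = 1 := by
    rw [← Matrix.det_mul, ← Matrix.map_mul, h1,
      Matrix.map_one _ (map_zero C) (map_one C), Matrix.det_one]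
  rw [Matrix.charpoly, key, Matrix.det_mul, Matrix.det_mul, mul_right_comm, hdet, one_mul]
  rfl

lemma myCharpolyDiagonal {n : Type*} [Fintype n] [DecidableEq n] (d : n → ℂ) :
    (Matrix.diagonal d).charpoly = ∏ i, (X - C (d i)) := by
  have : charmatrix (Matrix.diagonal d) = Matrix.diagonal fun i => X - C (d i) := by
    ext i j
    by_cases h : i = j
    · subst h; simp
    · simp [h, Matrix.diagonal_apply_ne _ h]
  rw [Matrix.charpoly, this, Matrix.det_diagonal]

lemma myRootsProd {n : Type*} [Fintype n] (c : n → ℂ) :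
    (∏ i, (X - C (c i))).roots = Finset.univ.val.map c := by
  have h := Polynomial.roots_multiset_prod_X_sub_C (Finset.univ.val.map c)
  rw [Multiset.map_map] at h
  rw [← h, Finset.prod_eq_multiset_prod]
  rfl

lemma eig_roots {n : Type*} [Fintype n] [DecidableEq n] {A : Matrix n n ℂ}
    (hA : A.IsHermitian) :
    A.charpoly.roots = Finset.univ.val.map fun i => (hA.eigenvalues i : ℂ) := by
  have h1 : (hA.eigenvectorUnitary : Matrix n n ℂ) *
      star (hA.eigenvectorUnitary : Matrix n n ℂ) = 1 :=
    Matrix.mem_unitaryGroup_iff.mp hA.eigenvectorUnitary.2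
  conv_lhs => rw [hA.spectral_theorem, Unitary.conjStarAlgAut_apply]
  rw [myCharpolyConj _ _ _ h1, myCharpolyDiagonal, myRootsProd]
  rfl

lemma sum_g_eig {n : Type*} [Fintype n] [DecidableEq n] {A : Matrix n n ℂ}
    (hA : A.IsHermitian) {m : Type*} [Fintype m] (c : m → ℝ)
    (h : A.charpoly.roots = Finset.univ.val.map (fun j => (c j : ℂ))) (g : ℝ → ℝ) :
    ∑ i, g (hA.eigenvalues i) = ∑ j, g (c j) := by
  have h2 := eig_roots hA
  rw [h] at h2
  have h3 := congrArg (fun s => (Multiset.map (fun z : ℂ => g z.re) s).sum) h2.symm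
  simp only [Multiset.map_map, Function.comp] at h3
  simp only [Complex.ofReal_re] at h3
  rw [Finset.sum_eq_multiset_sum, Finset.sum_eq_multiset_sum]
  exact h3

lemma kron_isHermitian {m n : Type*} [Fintype m] [DecidableEq m] [Fintype n] [DecidableEq n]
    {A : Matrix m m ℂ} {B : Matrix n n ℂ} (hA : A.IsHermitian) (hB : B.IsHermitian) :
    (A ⊗ₖ B).IsHermitian := by
  ext i j
  have ha : star (A (j.1) (i.1)) = A i.1 j.1 := hA.apply i.1 j.1
  have hb : star (B (j.2) (i.2)) = B i.2 j.2 := hB.apply i.2 j.2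
  simp only [Matrix.conjTranspose_apply, Matrix.kroneckerMap_apply, star_mul', ha, hb]

lemma mmix_isHermitian (m : Type*) [Fintype m] [DecidableEq m] : (mmix m).IsHermitian := by
  rw [Matrix.IsHermitian, mmix, Matrix.conjTranspose_smul, Matrix.conjTranspose_one]
  congr 1
  simp

end Aux

/-- extension by a maximally mixed state. -/
theorem qscm_extension_mmix {N : ℕ} (hN : 2 ≤ N)
    (ρ : Matrix (Fin N) (Fin N) ℂ) (hρ : ρ.PosSemidef) (htr : ρ.trace = 1) :
    qscm (ρ ⊗ₖ mmix (Fin N)) = (vNEntropy ρ + Real.log N) / (2 * Real.log N) * diseq ρ ∧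
    qscm (ρ ⊗ₖ mmix (Fin N)) = qscm ρ / 2 + diseq ρ / 2 := by
  have hH : ρ.IsHermitian := hρ.1
  set lam : Fin N → ℝ := hH.eigenvalues with hlam
  have hN1 : (1:ℝ) < (N:ℝ) := by exact_mod_cast lt_of_lt_of_le one_lt_two hN
  have hNpos : (0:ℝ) < (N:ℝ) := lt_trans one_pos hN1
  have hNne : (N:ℝ) ≠ 0 := ne_of_gt hNpos
  have hNCne : (N:ℂ) ≠ 0 := by exact_mod_cast (Nat.cast_ne_zero (R := ℂ)).mpr (by omega)
  have hLpos : 0 < Real.log N := Real.log_pos hN1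
  have hLne : Real.log N ≠ 0 := ne_of_gt hLpos
  set V : Matrix (Fin N) (Fin N) ℂ := (hH.eigenvectorUnitary : Matrix (Fin N) (Fin N) ℂ) with hVdef
  have hVW : V * star V = 1 := Matrix.mem_unitaryGroup_iff.mp hH.eigenvectorUnitary.2
  have hWV : star V * V = 1 := Matrix.mem_unitaryGroup_iff'.mp hH.eigenvectorUnitary.2
  have hspec : ρ = V * Matrix.diagonal (fun i => (lam i : ℂ)) * star V := hH.spectral_theorem
  have hm : mmix (Fin N) = Matrix.diagonal (fun _ : Fin N => (N:ℂ)⁻¹) := by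
    rw [mmix, Fintype.card_fin, Matrix.smul_eq_diagonal_mul, mul_one]
  have hunit : (V ⊗ₖ (1 : Matrix (Fin N) (Fin N) ℂ)) * (star V ⊗ₖ 1) = 1 := by
    rw [← Matrix.mul_kronecker_mul, hVW, mul_one, Matrix.one_kronecker_one]
  have hdecomp : ∀ dv : Fin N → ℂ,
      (V ⊗ₖ (1 : Matrix (Fin N) (Fin N) ℂ)) *
        Matrix.diagonal (fun p : Fin N × Fin N => dv p.1 * (N:ℂ)⁻¹) * (star V ⊗ₖ 1)
      = (V * Matrix.diagonal dv * star V) ⊗ₖ mmix (Fin N) := by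
    intro dv
    have hkd : Matrix.diagonal (fun p : Fin N × Fin N => dv p.1 * (N:ℂ)⁻¹)
        = Matrix.diagonal dv ⊗ₖ Matrix.diagonal (fun _ : Fin N => (N:ℂ)⁻¹) :=
      (Matrix.diagonal_kronecker_diagonal dv (fun _ : Fin N => (N:ℂ)⁻¹)).symm
    rw [hm, hkd, ← Matrix.mul_kronecker_mul, ← Matrix.mul_kronecker_mul,
      Matrix.one_mul, Matrix.mul_one]
  have hroots : ∀ dv : Fin N → ℂ,
      ((V * Matrix.diagonal dv * star V) ⊗ₖ mmix (Fin N)).charpoly.roots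
        = Finset.univ.val.map (fun p : Fin N × Fin N => dv p.1 * (N:ℂ)⁻¹) := by
    intro dv
    rw [← hdecomp dv, myCharpolyConj _ _ _ hunit, myCharpolyDiagonal, myRootsProd]
  -- roots for σ = ρ ⊗ₖ mmix
  have hroots1 : (ρ ⊗ₖ mmix (Fin N)).charpoly.roots
      = Finset.univ.val.map (fun p : Fin N × Fin N => ((lam p.1 / N : ℝ) : ℂ)) := by
    conv_lhs => rw [hspec]
    rw [hroots]
    congr 1
    funext p
    push_cast
    ring
  -- B = ρ - mmix
  have hBdiag : Matrix.diagonal (fun i : Fin N => ((lam i - (N:ℝ)⁻¹ : ℝ) : ℂ))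
      = Matrix.diagonal (fun i => (lam i : ℂ)) - Matrix.diagonal (fun _ : Fin N => (N:ℂ)⁻¹) := by
    rw [Matrix.diagonal_sub]
    congr 1
    funext i
    push_cast
    ring
  have hmconj : V * Matrix.diagonal (fun _ : Fin N => (N:ℂ)⁻¹) * star V = mmix (Fin N) := by
    have h1 : Matrix.diagonal (fun _ : Fin N => (N:ℂ)⁻¹)
        = ((N:ℂ)⁻¹) • (1 : Matrix (Fin N) (Fin N) ℂ) := by
      rw [Matrix.smul_eq_diagonal_mul, mul_one]
    rw [h1, Matrix.mul_smul, mul_one, Matrix.smul_mul, hVW, mmix, Fintype.card_fin]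
  have hBdecomp : ρ - mmix (Fin N)
      = V * Matrix.diagonal (fun i : Fin N => ((lam i - (N:ℝ)⁻¹ : ℝ) : ℂ)) * star V := by
    rw [hBdiag, Matrix.mul_sub, Matrix.sub_mul, ← hspec, hmconj]
  have hB : (ρ - mmix (Fin N)).IsHermitian := hH.sub (mmix_isHermitian _)
  have hrootsB : (ρ - mmix (Fin N)).charpoly.roots
      = Finset.univ.val.map (fun i : Fin N => ((lam i - (N:ℝ)⁻¹ : ℝ) : ℂ)) := by
    conv_lhs => rw [hBdecomp]
    rw [myCharpolyConj _ _ _ hVW, myCharpolyDiagonal, myRootsProd]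
  have hmm2 : mmix (Fin N × Fin N) = mmix (Fin N) ⊗ₖ mmix (Fin N) := by
    rw [mmix, mmix, Matrix.smul_kronecker, Matrix.kronecker_smul, Matrix.one_kronecker_one,
      smul_smul, Fintype.card_prod, Fintype.card_fin, Nat.cast_mul, mul_inv]
  have hsubk : (ρ - mmix (Fin N)) ⊗ₖ mmix (Fin N)
      = ρ ⊗ₖ mmix (Fin N) - mmix (Fin N) ⊗ₖ mmix (Fin N) := by
    ext i j
    simp [Matrix.kroneckerMap_apply, Matrix.sub_apply, sub_mul]
  have hA_eq : ρ ⊗ₖ mmix (Fin N) - mmix (Fin N × Fin N) = (ρ - mmix (Fin N)) ⊗ₖ mmix (Fin N) := by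
    rw [hsubk, hmm2]
  have hrootsA : (ρ ⊗ₖ mmix (Fin N) - mmix (Fin N × Fin N)).charpoly.roots
      = Finset.univ.val.map
        (fun p : Fin N × Fin N => (((lam p.1 - (N:ℝ)⁻¹) * (N:ℝ)⁻¹ : ℝ) : ℂ)) := by
    rw [hA_eq, hBdecomp, hroots]
    congr 1
    funext p
    push_cast
    ring
  have hσ : (ρ ⊗ₖ mmix (Fin N)).IsHermitian := kron_isHermitian hH (mmix_isHermitian _)
  have hAH : (ρ ⊗ₖ mmix (Fin N) - mmix (Fin N × Fin N)).IsHermitian :=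
    hσ.sub (mmix_isHermitian _)
  have htrsum : ∑ i, lam i = 1 := by
    have h1 : ρ.trace = ∑ i, (lam i : ℂ) := by
      conv_lhs => rw [hspec]
      rw [Matrix.trace_mul_comm, ← Matrix.mul_assoc, hWV, Matrix.one_mul, Matrix.trace_diagonal]
    have h2 : ((∑ i, lam i : ℝ) : ℂ) = 1 := by
      push_cast
      rw [← h1, htr]
    exact_mod_cast h2
  have E1 : vNEntropy (ρ ⊗ₖ mmix (Fin N)) = vNEntropy ρ + Real.log N := by
    rw [vNEntropy, dif_pos hσ, vNEntropy, dif_pos hH]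
    have e1 : ∑ j, hσ.eigenvalues j * Real.log (hσ.eigenvalues j)
        = ∑ p : Fin N × Fin N, (lam p.1 / N) * Real.log (lam p.1 / N) :=
      sum_g_eig hσ _ hroots1 (fun x => x * Real.log x)
    rw [e1, Fintype.sum_prod_type]
    have e2 : ∀ i : Fin N, ∑ _k : Fin N, (lam i / N) * Real.log (lam i / N)
        = lam i * Real.log (lam i) - lam i * Real.log N := by
      intro i
      rw [Finset.sum_const, Finset.card_univ, Fintype.card_fin, nsmul_eq_mul]
      by_cases h : lam i = 0
      · simp [h]
      · rw [Real.log_div h hNne]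
        field_simp
    rw [Finset.sum_congr rfl (fun i _ => e2 i), Finset.sum_sub_distrib, ← Finset.sum_mul, htrsum]
    ring
  have E2 : diseq (ρ ⊗ₖ mmix (Fin N)) = diseq ρ := by
    rw [diseq, diseq, traceNorm, dif_pos hAH, traceNorm, dif_pos hB]
    congr 1
    have e1 : ∑ j, |hAH.eigenvalues j|
        = ∑ p : Fin N × Fin N, |(lam p.1 - (N:ℝ)⁻¹) * (N:ℝ)⁻¹| :=
      sum_g_eig hAH _ hrootsA (fun x => |x|)
    have e2 : ∑ i, |hB.eigenvalues i| = ∑ i, |lam i - (N:ℝ)⁻¹| :=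
      sum_g_eig hB _ hrootsB (fun x => |x|)
    rw [e1, e2, Fintype.sum_prod_type]
    refine Finset.sum_congr rfl fun i _ => ?_
    show (∑ _y : Fin N, |(lam i - (N:ℝ)⁻¹) * (N:ℝ)⁻¹|) = |lam i - (N:ℝ)⁻¹|
    rw [Finset.sum_const, Finset.card_univ, Fintype.card_fin, nsmul_eq_mul, abs_mul,
      abs_of_pos (inv_pos.mpr hNpos)]
    field_simp
  have hcard : ((Fintype.card (Fin N × Fin N) : ℕ) : ℝ) = (N:ℝ) * N := by
    rw [Fintype.card_prod, Fintype.card_fin]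
    push_cast
    ring
  have E3 : Real.log (Fintype.card (Fin N × Fin N)) = 2 * Real.log N := by
    rw [hcard, Real.log_mul hNne hNne]
    ring
  have hq : qscm (ρ ⊗ₖ mmix (Fin N))
      = (vNEntropy ρ + Real.log N) * diseq ρ / (2 * Real.log N) := by
    rw [qscm, E1, E2, E3]
  have hqρ : qscm ρ = vNEntropy ρ * diseq ρ / Real.log N := by
    rw [qscm, Fintype.card_fin]
  constructor
  · rw [hq]
    ring
  · rw [hq, hqρ]
    field_simp
end

section
/- Upper bound for extension by a maximally mixed state: for every N×N density matrix ρ (N ≥ 2), C(ρ ⊗ (I/N)) ≤ C(ρ)/2 + 1/2, where ρ ⊗ (I/N) is the N²×N² Kronecker product of ρ with the normalized N×N identity matrix. -/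
open Matrix BigOperators Kronecker ComplexOrder

section Aux

open Polynomial

lemma charpoly_conj_aux {n : Type*} [Fintype n] [DecidableEq n] (V W M : Matrix n n ℂ)
    (h1 : V * W = 1) : (V * M * W).charpoly = M.charpoly := by
  have h2 : W * V = 1 := mul_eq_one_comm.mp h1
  unfold Matrix.charpoly charmatrix
  have key : Matrix.scalar n (X : ℂ[X]) - (C : ℂ →+* ℂ[X]).mapMatrix (V * M * W)
      = (C : ℂ →+* ℂ[X]).mapMatrix V * (Matrix.scalar n (X : ℂ[X]) - (C : ℂ →+* ℂ[X]).mapMatrix M) * (C : ℂ →+* ℂ[X]).mapMatrix W := by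
    rw [mul_sub, sub_mul, _root_.map_mul, _root_.map_mul]
    congr 1
    rw [← (scalar_commute (X : ℂ[X]) (fun r => Commute.all _ _) ((C : ℂ →+* ℂ[X]).mapMatrix V)).eq,
      mul_assoc, ← _root_.map_mul, h1, _root_.map_one, mul_one]
  have hdet : ((C : ℂ →+* ℂ[X]).mapMatrix V).det * ((C : ℂ →+* ℂ[X]).mapMatrix W).det = 1 := by
    rw [← det_mul, ← _root_.map_mul, h1, _root_.map_one, det_one]
  rw [key, det_mul, det_mul]
  linear_combination (Matrix.scalar n (X : ℂ[X]) - (C : ℂ →+* ℂ[X]).mapMatrix M).det * hdet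

lemma charpoly_diag {n : Type*} [Fintype n] [DecidableEq n] (v : n → ℂ) :
    (Matrix.diagonal v).charpoly = ∏ i, ((X : ℂ[X]) - C (v i)) := by
  unfold Matrix.charpoly charmatrix
  have : Matrix.scalar n (X : ℂ[X]) - (C : ℂ →+* ℂ[X]).mapMatrix (Matrix.diagonal v)
      = Matrix.diagonal (fun i => (X : ℂ[X]) - C (v i)) := by
    ext i j
    by_cases h : i = j <;> simp [h, Matrix.scalar, Matrix.diagonal_apply, charmatrix]
  rw [this, det_diagonal]

lemma charpoly_eq_of_real_diag {n : Type*} [Fintype n] [DecidableEq n] {A : Matrix n n ℂ}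
    {d : n → ℝ} {V : Matrix n n ℂ} (hV : V * star V = 1)
    (h : A = V * Matrix.diagonal (Complex.ofReal ∘ d) * star V) :
    A.charpoly = ∏ i, ((X : ℂ[X]) - C ((d i : ℂ))) := by
  rw [h, charpoly_conj_aux _ _ _ hV, charpoly_diag]
  rfl

lemma herm_of_real_diag {n : Type*} [Fintype n] [DecidableEq n] {A : Matrix n n ℂ}
    {d : n → ℝ} {V : Matrix n n ℂ}
    (h : A = V * Matrix.diagonal (Complex.ofReal ∘ d) * star V) : A.IsHermitian := by
  rw [h]
  unfold Matrix.IsHermitian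
  rw [conjTranspose_mul, conjTranspose_mul, diagonal_conjTranspose]
  have : star (Complex.ofReal ∘ d) = Complex.ofReal ∘ d := by
    funext i; simp [Function.comp]
  rw [this]
  simp [Matrix.star_eq_conjTranspose, mul_assoc]

lemma eig_sum {n : Type*} [Fintype n] [DecidableEq n] {A : Matrix n n ℂ}
    (hA : A.IsHermitian) {d : n → ℝ} {V : Matrix n n ℂ}
    (hV : V * star V = 1)
    (h : A = V * Matrix.diagonal (Complex.ofReal ∘ d) * star V) (f : ℝ → ℝ) :
    ∑ i, f (hA.eigenvalues i) = ∑ i, f (d i) := by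
  have roots_eq : ∀ (v : n → ℝ),
      (∏ i, ((X : ℂ[X]) - C ((v i : ℂ)))).roots = Finset.univ.val.map (fun i => ((v i : ℂ))) := by
    intro v
    have : ∏ i, ((X : ℂ[X]) - C ((v i : ℂ)))
        = ((Finset.univ.val.map (fun i => ((v i : ℂ)))).map (fun a => (X : ℂ[X]) - C a)).prod := by
      rw [Multiset.map_map]
      rfl
    rw [this, Polynomial.roots_multiset_prod_X_sub_C]
  have h1 := charpoly_eq_of_real_diag hV h
  have h2 : A.charpoly = ∏ i, ((X : ℂ[X]) - C ((hA.eigenvalues i : ℂ))) := by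
    refine charpoly_eq_of_real_diag ?_ hA.spectral_theorem
    exact (Matrix.mem_unitaryGroup_iff).mp (hA.eigenvectorUnitary).2
  have hc : Finset.univ.val.map (fun i => ((hA.eigenvalues i : ℂ)))
      = Finset.univ.val.map (fun i => ((d i : ℂ))) := by
    rw [← roots_eq, ← roots_eq, ← h1, ← h2]
  have hr : Finset.univ.val.map hA.eigenvalues = Finset.univ.val.map d := by
    apply Multiset.map_injective Complex.ofReal_injective
    rw [Multiset.map_map, Multiset.map_map]
    exact hc
  calc ∑ i, f (hA.eigenvalues i) = ((Finset.univ.val.map hA.eigenvalues).map f).sum := by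
        rw [Multiset.map_map]; rfl
    _ = ((Finset.univ.val.map d).map f).sum := by rw [hr]
    _ = ∑ i, f (d i) := by rw [Multiset.map_map]; rfl

lemma smul_one_eq_diag {n : Type*} [Fintype n] [DecidableEq n] (c : ℂ) :
    (c • (1 : Matrix n n ℂ)) = Matrix.diagonal (fun _ => c) := by
  ext i j
  by_cases h : i = j <;> simp [h, Matrix.one_apply, Matrix.diagonal_apply]

lemma rep_sub_smul_one {n : Type*} [Fintype n] [DecidableEq n] {A : Matrix n n ℂ}
    {d : n → ℝ} {V : Matrix n n ℂ} (hV : V * star V = 1)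
    (h : A = V * Matrix.diagonal (Complex.ofReal ∘ d) * star V) (r : ℝ) :
    A - ((r : ℂ) • (1 : Matrix n n ℂ))
      = V * Matrix.diagonal (Complex.ofReal ∘ (fun i => d i - r)) * star V := by
  have hd : Matrix.diagonal (Complex.ofReal ∘ (fun i => d i - r))
      = Matrix.diagonal (Complex.ofReal ∘ d) - (r : ℂ) • (1 : Matrix n n ℂ) := by
    ext i j
    by_cases h : i = j <;>
      simp [h, Matrix.diagonal_apply, Matrix.one_apply, Function.comp]
  rw [hd, mul_sub, sub_mul, h]
  congr 1
  rw [Matrix.mul_smul, Matrix.smul_mul, mul_one, hV]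

end Aux

/-- upper bound for extension by a maximally mixed state. -/
theorem qscm_extension_mmix_le {N : ℕ} (hN : 2 ≤ N)
    (ρ : Matrix (Fin N) (Fin N) ℂ) (hρ : ρ.PosSemidef) (htr : ρ.trace = 1) :
    qscm (ρ ⊗ₖ mmix (Fin N)) ≤ qscm ρ / 2 + 1/2 := by
  have hN0 : (0:ℝ) < N := by positivity
  have hNne : (N:ℝ) ≠ 0 := ne_of_gt hN0
  have hL : 0 < Real.log N := Real.log_pos (by exact_mod_cast lt_of_lt_of_le one_lt_two (by exact_mod_cast hN))
  set Λ : Fin N → ℝ := hρ.1.eigenvalues with hΛ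
  set V : Matrix (Fin N) (Fin N) ℂ := (hρ.1.eigenvectorUnitary : Matrix (Fin N) (Fin N) ℂ) with hVdef
  have hV : V * star V = 1 := (Matrix.mem_unitaryGroup_iff).mp (hρ.1.eigenvectorUnitary).2
  have h0 : ρ = V * Matrix.diagonal (Complex.ofReal ∘ Λ) * star V := hρ.1.spectral_theorem
  -- sum of eigenvalues is 1
  have hsum : ∑ i, Λ i = 1 := by
    have h2 : star V * V = 1 := mul_eq_one_comm.mp hV
    have : ρ.trace = ∑ i, (Λ i : ℂ) := by
      rw [h0, Matrix.trace_mul_comm, ← mul_assoc, h2, one_mul, Matrix.trace_diagonal]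
      rfl
    rw [this] at htr
    have : ((∑ i, Λ i : ℝ) : ℂ) = ((1:ℝ) : ℂ) := by push_cast; simpa using htr
    exact_mod_cast this
  have hΛ0 : ∀ i, 0 ≤ Λ i := fun i => hρ.eigenvalues_nonneg i
  -- maximally mixed state as real scalar matrix
  have hmm : mmix (Fin N) = (((N:ℝ)⁻¹ : ℝ) : ℂ) • (1 : Matrix (Fin N) (Fin N) ℂ) := by
    unfold mmix
    rw [Fintype.card_fin]
    norm_num
  have hrep1 : ρ - mmix (Fin N)
      = V * Matrix.diagonal (Complex.ofReal ∘ fun i => Λ i - (N:ℝ)⁻¹) * star V := by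
    rw [hmm]; exact rep_sub_smul_one hV h0 _
  have hherm1 := herm_of_real_diag hrep1
  have hT : traceNorm (ρ - mmix (Fin N)) = ∑ i, |Λ i - (N:ℝ)⁻¹| := by
    simp only [traceNorm]
    rw [dif_pos hherm1]
    exact eig_sum hherm1 hV hrep1 (fun x => |x|)
  set T := ∑ i, |Λ i - (N:ℝ)⁻¹| with hTdef
  have hT2 : T ≤ 2 := by
    have : T ≤ ∑ i : Fin N, (Λ i + (N:ℝ)⁻¹) := by
      refine Finset.sum_le_sum (fun i _ => ?_)
      calc |Λ i - (N:ℝ)⁻¹| ≤ |Λ i| + |(N:ℝ)⁻¹| := abs_sub _ _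
        _ = Λ i + (N:ℝ)⁻¹ := by
            rw [abs_of_nonneg (hΛ0 i), abs_of_nonneg (by positivity)]
    have h2 : ∑ i : Fin N, (Λ i + (N:ℝ)⁻¹) = 2 := by
      rw [Finset.sum_add_distrib, hsum, Finset.sum_const, Finset.card_univ, Fintype.card_fin,
        nsmul_eq_mul, mul_inv_cancel₀ hNne]
      norm_num
    linarith
  have hS : vNEntropy ρ = -∑ i, Λ i * Real.log (Λ i) := by
    simp only [vNEntropy]
    rw [dif_pos hρ.1]
  set S := -∑ i, Λ i * Real.log (Λ i) with hSdef
  -- kronecker representation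
  set V2 : Matrix (Fin N × Fin N) (Fin N × Fin N) ℂ := V ⊗ₖ (1 : Matrix (Fin N) (Fin N) ℂ)
    with hV2def
  have hstar2 : star V2 = star V ⊗ₖ 1 := by
    ext p q
    simp [hV2def, Matrix.star_eq_conjTranspose, Matrix.conjTranspose_apply, Matrix.one_apply,
      apply_ite (starRingEnd ℂ), eq_comm]
  have hV2 : V2 * star V2 = 1 := by
    rw [hstar2, hV2def, ← Matrix.mul_kronecker_mul, hV, one_mul, Matrix.one_kronecker_one]
  have hrep2 : ρ ⊗ₖ mmix (Fin N)
      = V2 * Matrix.diagonal (Complex.ofReal ∘ fun p : Fin N × Fin N => Λ p.1 * (N:ℝ)⁻¹)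
        * star V2 := by
    rw [hstar2, hV2def, h0]
    have hm1 : mmix (Fin N) = (1 : Matrix (Fin N) (Fin N) ℂ)
        * Matrix.diagonal (fun _ : Fin N => (((N:ℝ)⁻¹ : ℝ) : ℂ)) * (1 : Matrix (Fin N) (Fin N) ℂ) := by
      rw [hmm, smul_one_eq_diag, one_mul, mul_one]
    rw [hm1, Matrix.mul_kronecker_mul, Matrix.mul_kronecker_mul,
      Matrix.diagonal_kronecker_diagonal]
    refine congrArg₂ HMul.hMul (congrArg₂ HMul.hMul rfl ?_) rfl
    apply congrArg Matrix.diagonal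
    funext p
    simp only [Function.comp_apply, Function.comp]
    push_cast
    ring
  have hherm2 := herm_of_real_diag hrep2
  -- entropy of the extension
  have hf : ∀ x : ℝ, 0 ≤ x → (x * (N:ℝ)⁻¹) * Real.log (x * (N:ℝ)⁻¹)
      = (N:ℝ)⁻¹ * (x * Real.log x) - (N:ℝ)⁻¹ * (x * Real.log N) := by
    intro x hx
    rcases eq_or_lt_of_le hx with h|h
    · simp [← h]
    · rw [Real.log_mul (ne_of_gt h) (by positivity), Real.log_inv]
      ring
  have hS2 : vNEntropy (ρ ⊗ₖ mmix (Fin N)) = S + Real.log N := by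
    simp only [vNEntropy]
    rw [dif_pos hherm2]
    have h : ∑ p, (hherm2.eigenvalues p) * Real.log (hherm2.eigenvalues p)
        = ∑ p : Fin N × Fin N, (Λ p.1 * (N:ℝ)⁻¹) * Real.log (Λ p.1 * (N:ℝ)⁻¹) :=
      eig_sum hherm2 hV2 hrep2 (fun x => x * Real.log x)
    rw [h, Fintype.sum_prod_type]
    have hinner : ∀ i : Fin N, ∑ _j : Fin N, (Λ i * (N:ℝ)⁻¹) * Real.log (Λ i * (N:ℝ)⁻¹)
        = Λ i * Real.log (Λ i) - Λ i * Real.log N := by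
      intro i
      rw [Finset.sum_const, Finset.card_univ, Fintype.card_fin, nsmul_eq_mul, hf (Λ i) (hΛ0 i)]
      field_simp
    rw [Finset.sum_congr rfl (fun i _ => hinner i), Finset.sum_sub_distrib, ← Finset.sum_mul,
      hsum, one_mul]
    rw [hSdef]
    ring
  -- disequilibrium of the extension
  have hmm2 : mmix (Fin N × Fin N) = ((((N:ℝ) * N)⁻¹ : ℝ) : ℂ) • (1 : Matrix (Fin N × Fin N) (Fin N × Fin N) ℂ) := by
    unfold mmix
    rw [Fintype.card_prod, Fintype.card_fin]
    push_cast
    norm_num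
  have hrep3 : ρ ⊗ₖ mmix (Fin N) - mmix (Fin N × Fin N)
      = V2 * Matrix.diagonal (Complex.ofReal ∘ fun p : Fin N × Fin N =>
          (Λ p.1 * (N:ℝ)⁻¹ - ((N:ℝ) * N)⁻¹)) * star V2 := by
    rw [hmm2]; exact rep_sub_smul_one hV2 hrep2 _
  have hherm3 := herm_of_real_diag hrep3
  have hT3 : traceNorm (ρ ⊗ₖ mmix (Fin N) - mmix (Fin N × Fin N)) = T := by
    simp only [traceNorm]
    rw [dif_pos hherm3]
    have h : ∑ p, |hherm3.eigenvalues p|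
        = ∑ p : Fin N × Fin N, |Λ p.1 * (N:ℝ)⁻¹ - ((N:ℝ) * N)⁻¹| :=
      eig_sum hherm3 hV2 hrep3 (fun x => |x|)
    rw [h, Fintype.sum_prod_type]
    have hinner : ∀ i : Fin N, ∑ _j : Fin N, |Λ i * (N:ℝ)⁻¹ - ((N:ℝ) * N)⁻¹|
        = |Λ i - (N:ℝ)⁻¹| := by
      intro i
      have e : Λ i * (N:ℝ)⁻¹ - ((N:ℝ) * N)⁻¹ = (N:ℝ)⁻¹ * (Λ i - (N:ℝ)⁻¹) := by
        field_simp
      rw [Finset.sum_const, Finset.card_univ, Fintype.card_fin, nsmul_eq_mul, e, abs_mul,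
        abs_of_nonneg (by positivity : (0:ℝ) ≤ (N:ℝ)⁻¹), ← mul_assoc,
        mul_inv_cancel₀ hNne, one_mul]
    rw [Finset.sum_congr rfl (fun i _ => hinner i), hTdef]
  -- put everything together
  have hq1 : qscm ρ = S * ((1/2) * T) / Real.log N := by
    simp only [qscm, diseq]
    rw [hS, hT, Fintype.card_fin]
  have hq2 : qscm (ρ ⊗ₖ mmix (Fin N)) = (S + Real.log N) * ((1/2) * T) / (2 * Real.log N) := by
    simp only [qscm, diseq]
    rw [hS2, hT3, Fintype.card_prod, Fintype.card_fin]
    congr 1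
    push_cast
    rw [Real.log_mul hNne hNne]
    ring
  rw [hq1, hq2]
  have hLne : Real.log N ≠ 0 := ne_of_gt hL
  have key : (S + Real.log N) * ((1/2) * T) / (2 * Real.log N)
      = S * ((1/2) * T) / Real.log N / 2 + T / 4 := by
    field_simp
    ring
  rw [key]
  linarith
end

section
/- Extension of n copies by n maximally mixed states: for every N×N density matrix ρ (N ≥ 2) and every n ≥ 1, the quantum statistical complexity of the N^{2n}-dimensional density matrix ρ^⊗n ⊗ (I/N)^⊗n satisfies C(ρ^⊗n ⊗ (I/N)^⊗n) ≤ n·(C(ρ)/2 + 1/2), where ρ^⊗n denotes the n-fold Kronecker product and (I/N)^⊗n the n-fold Kronecker product of the normalized N×N identity matrix. -/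
open Matrix BigOperators Kronecker ComplexOrder

section Helpers
open Polynomial


lemma charpoly_diagonal' {m : Type*} [Fintype m] [DecidableEq m] (v : m → ℂ) :
    (Matrix.diagonal v).charpoly = ∏ i, (Polynomial.X - Polynomial.C (v i)) := by
  rw [Matrix.charpoly]
  have h : charmatrix (Matrix.diagonal v) =
      Matrix.diagonal (fun i => (X : ℂ[X]) - C (v i)) := by
    ext i j
    by_cases h : i = j
    · subst h; simp [charmatrix_apply_eq]
    · simp [charmatrix_apply_ne _ _ _ h, Matrix.diagonal_apply_ne _ h]
  rw [h, Matrix.det_diagonal]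

lemma charpoly_conj_unitary {m : Type*} [Fintype m] [DecidableEq m]
    (U D : Matrix m m ℂ) (h1 : U * Uᴴ = 1) :
    (U * D * Uᴴ).charpoly = D.charpoly := by
  have hmapone : (1 : Matrix m m ℂ).map (C : ℂ →+* ℂ[X]) = 1 :=
    Matrix.map_one _ (map_zero C) (map_one C)
  have hc : charmatrix (U * D * Uᴴ) =
      (U.map (C : ℂ →+* ℂ[X])) * charmatrix D * (Uᴴ.map (C : ℂ →+* ℂ[X])) := by
    unfold charmatrix
    rw [Matrix.mul_sub, Matrix.sub_mul]
    congr 1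
    · have hscal : (Matrix.diagonal fun (_ : m) => (X : ℂ[X])) =
          (X : ℂ[X]) • (1 : Matrix m m ℂ[X]) := by
        rw [Matrix.smul_eq_diagonal_mul, mul_one]
      rw [Matrix.scalar_apply, hscal, Matrix.mul_smul, Matrix.smul_mul, mul_one,
        ← Matrix.map_mul, h1, hmapone]
    · simp [RingHom.mapMatrix_apply, Matrix.map_mul]
  rw [Matrix.charpoly, Matrix.charpoly, hc, Matrix.det_mul, Matrix.det_mul]
  rw [mul_assoc, mul_comm (D.charmatrix.det), ← mul_assoc, ← Matrix.det_mul, ← Matrix.map_mul,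
    h1, hmapone, Matrix.det_one, one_mul]

lemma multiset_of_prod_X_sub_C {m : Type*} [Fintype m] (v : m → ℂ) :
    (∏ i, (X - C (v i))).roots = Finset.univ.val.map v := by
  rw [Finset.prod_eq_multiset_prod]
  have h2 : Multiset.map (fun i => X - C (v i)) Finset.univ.val =
      Multiset.map (fun a => X - C a) (Multiset.map v Finset.univ.val) :=
    (Multiset.map_map (fun a => X - C a) v Finset.univ.val).symm
  rw [h2, roots_multiset_prod_X_sub_C]

lemma eig_sum_eq_same {m : Type*} [Fintype m] [DecidableEq m]
    {A : Matrix m m ℂ} (hA : A.IsHermitian) (U : Matrix m m ℂ) (d : m → ℝ)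
    (h1 : U * Uᴴ = 1)
    (hAeq : A = U * Matrix.diagonal (fun i => (d i : ℂ)) * Uᴴ)
    (f : ℝ → ℝ) : ∑ i, f (hA.eigenvalues i) = ∑ j, f (d j) := by
  have hW : (hA.eigenvectorUnitary : Matrix m m ℂ) *
      (hA.eigenvectorUnitary : Matrix m m ℂ)ᴴ = 1 := by
    rw [← Matrix.star_eq_conjTranspose]
    exact (Matrix.mem_unitaryGroup_iff).mp (hA.eigenvectorUnitary).2
  have hche : A.charpoly = ∏ i, (X - C ((hA.eigenvalues i : ℝ) : ℂ)) := by
    have hst := hA.spectral_theorem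
    rw [Unitary.conjStarAlgAut_apply, Matrix.star_eq_conjTranspose] at hst
    conv_lhs => rw [hst]
    rw [charpoly_conj_unitary _ _ hW]
    have : Matrix.diagonal (RCLike.ofReal ∘ hA.eigenvalues) =
        Matrix.diagonal (fun i => ((hA.eigenvalues i : ℝ) : ℂ)) := rfl
    rw [this, charpoly_diagonal']
  have hchd : A.charpoly = ∏ i, (X - C ((d i : ℝ) : ℂ)) := by
    rw [hAeq, charpoly_conj_unitary _ _ h1, charpoly_diagonal']
  have hmc : (Finset.univ.val.map (fun i => ((hA.eigenvalues i : ℝ) : ℂ))) =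
      (Finset.univ.val.map (fun i => ((d i : ℝ) : ℂ))) := by
    rw [← multiset_of_prod_X_sub_C, ← multiset_of_prod_X_sub_C, ← hche, ← hchd]
  have hmr : (Finset.univ.val.map hA.eigenvalues) = (Finset.univ.val.map d) := by
    have h3 := congrArg (Multiset.map Complex.re) hmc
    rw [Multiset.map_map, Multiset.map_map] at h3
    exact h3
  rw [Finset.sum_eq_multiset_sum, Finset.sum_eq_multiset_sum]
  have e1 : Multiset.map (fun i => f (hA.eigenvalues i)) Finset.univ.val =
      Multiset.map f (Multiset.map hA.eigenvalues Finset.univ.val) :=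
    (Multiset.map_map f hA.eigenvalues Finset.univ.val).symm
  have e2 : Multiset.map (fun j => f (d j)) Finset.univ.val =
      Multiset.map f (Multiset.map d Finset.univ.val) :=
    (Multiset.map_map f d Finset.univ.val).symm
  rw [e1, e2, hmr]

lemma eig_sum_eq {m ι : Type*} [Fintype m] [DecidableEq m] [Fintype ι] [DecidableEq ι]
    {A : Matrix m m ℂ} (hA : A.IsHermitian) (U : Matrix m ι ℂ) (d : ι → ℝ)
    (h1 : U * Uᴴ = 1) (h2 : Uᴴ * U = 1)
    (hAeq : A = U * Matrix.diagonal (fun i => (d i : ℂ)) * Uᴴ)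
    (f : ℝ → ℝ) : ∑ i, f (hA.eigenvalues i) = ∑ j, f (d j) := by
  have hcard : Fintype.card m = Fintype.card ι := by
    have t1 : ((Fintype.card m : ℂ)) = Fintype.card ι := by
      calc (Fintype.card m : ℂ) = Matrix.trace (1 : Matrix m m ℂ) := by
            simp [Matrix.trace_one]
        _ = Matrix.trace (U * Uᴴ) := by rw [h1]
        _ = Matrix.trace (Uᴴ * U) := Matrix.trace_mul_comm _ _
        _ = Matrix.trace (1 : Matrix ι ι ℂ) := by rw [h2]
        _ = Fintype.card ι := by simp [Matrix.trace_one]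
    exact_mod_cast t1
  let e : m ≃ ι := Fintype.equivOfCardEq hcard
  have hU1 : (U.submatrix id e) * (U.submatrix id e)ᴴ = 1 := by
    rw [Matrix.conjTranspose_submatrix, Matrix.submatrix_mul_equiv U Uᴴ id e id, h1]
    exact Matrix.submatrix_id_id 1
  have hAeq2 : A = (U.submatrix id e) *
      Matrix.diagonal (fun i => ((d (e i) : ℝ) : ℂ)) * (U.submatrix id e)ᴴ := by
    have hd : Matrix.diagonal (fun i => ((d (e i) : ℝ) : ℂ)) =
        (Matrix.diagonal (fun j => ((d j : ℝ) : ℂ))).submatrix e e := by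
      rw [Matrix.submatrix_diagonal_equiv]; rfl
    rw [Matrix.conjTranspose_submatrix, hd,
      Matrix.submatrix_mul_equiv U _ id e e,
      Matrix.submatrix_mul_equiv _ Uᴴ id e id]
    rw [← hAeq]
    exact (Matrix.submatrix_id_id A).symm
  rw [eig_sum_eq_same hA (U.submatrix id e) (fun i => d (e i)) hU1 hAeq2 f]
  exact Fintype.sum_equiv e _ _ (fun i => rfl)

lemma kronPow_conj {N n : ℕ} (B : Matrix (Fin N) (Fin N) ℂ) :
    kronPow (Bᴴ * B) n = (kronPow B n)ᴴ * kronPow B n := by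
  funext x y
  show ∏ i, (Bᴴ * B) (x i) (y i) = ∑ z, (kronPow B n)ᴴ x z * kronPow B n z y
  have hz : ∀ z : Fin n → Fin N, (kronPow B n)ᴴ x z * kronPow B n z y
      = ∏ i, ((starRingEnd ℂ) (B (z i) (x i)) * B (z i) (y i)) := by
    intro z
    rw [Finset.prod_mul_distrib]
    congr 1
    show (starRingEnd ℂ) (∏ i, B (z i) (x i)) = _
    rw [map_prod]
  simp_rw [hz]
  have hfac : ∀ i, (Bᴴ * B) (x i) (y i)
      = ∑ k, (starRingEnd ℂ) (B k (x i)) * B k (y i) := by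
    intro i
    rw [Matrix.mul_apply]
    rfl
  simp_rw [hfac]
  rw [Finset.prod_univ_sum]
  rw [← Fintype.piFinset_univ]

lemma kronPow_posSemidef {N n : ℕ} {ρ : Matrix (Fin N) (Fin N) ℂ} (hρ : ρ.PosSemidef) :
    (kronPow ρ n).PosSemidef := by
  obtain ⟨B, hB⟩ : ∃ B : Matrix (Fin N) (Fin N) ℂ, ρ = Bᴴ * B := by
    open scoped MatrixOrder in exact CStarAlgebra.nonneg_iff_eq_star_mul_self.mp hρ.nonneg
  rw [hB, kronPow_conj]
  exact Matrix.posSemidef_conjTranspose_mul_self _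

lemma kronPow_trace {N n : ℕ} (ρ : Matrix (Fin N) (Fin N) ℂ) :
    (kronPow ρ n).trace = ρ.trace ^ n := by
  show ∑ x : Fin n → Fin N, ∏ i, ρ (x i) (x i) = ρ.trace ^ n
  have : ρ.trace ^ n = ∏ _i : Fin n, ∑ k, ρ k k := by
    simp [Matrix.trace, Matrix.diag]
  rw [this, Finset.prod_univ_sum, ← Fintype.piFinset_univ]

lemma kronPow_mmix {N n : ℕ} (hN : 0 < N) :
    kronPow (mmix (Fin N)) n = (((N : ℂ)) ^ n)⁻¹ • (1 : Matrix (Fin n → Fin N) (Fin n → Fin N) ℂ) := by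
  funext x y
  show ∏ i, ((((Fintype.card (Fin N) : ℂ))⁻¹ • (1 : Matrix (Fin N) (Fin N) ℂ)) (x i) (y i)) = _
  simp only [Fintype.card_fin, Matrix.smul_apply, Matrix.one_apply, smul_eq_mul]
  rw [Finset.prod_mul_distrib]
  simp only [Finset.prod_const, Finset.card_univ, Fintype.card_fin]
  by_cases h : x = y
  · subst h
    simp [Matrix.one_apply_eq, inv_pow]
  · have : ∃ i, x i ≠ y i := by
      by_contra hc
      push_neg at hc
      exact h (funext hc)
    obtain ⟨i, hi⟩ := this
    rw [Finset.prod_eq_zero (Finset.mem_univ i) (by simp [hi]), if_neg h]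
    simp

lemma kron_conjTranspose {m n : Type*} [Fintype m] [Fintype n]
    (A : Matrix m m ℂ) (B : Matrix n n ℂ) : (A ⊗ₖ B)ᴴ = Aᴴ ⊗ₖ Bᴴ := by
  ext p q
  simp [Matrix.conjTranspose_apply, Matrix.kroneckerMap_apply, mul_comm]

lemma herm_of_unitary_diag {m ι : Type*} [Fintype m] [DecidableEq m] [Fintype ι] [DecidableEq ι]
    (U : Matrix m ι ℂ) (d : ι → ℝ) :
    (U * Matrix.diagonal (fun i => (d i : ℂ)) * Uᴴ).IsHermitian := by
  have hd : (Matrix.diagonal (fun i => (d i : ℂ)))ᴴ = Matrix.diagonal (fun i => (d i : ℂ)) := by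
    rw [Matrix.diagonal_conjTranspose]
    have hst : (star fun i => ((d i : ℝ) : ℂ)) = fun i => ((d i : ℝ) : ℂ) := by
      funext i
      simp only [Pi.star_apply, Complex.star_def]
      exact Complex.conj_ofReal (d i)
    rw [hst]
  show _ = _
  rw [Matrix.conjTranspose_mul, Matrix.conjTranspose_mul, Matrix.conjTranspose_conjTranspose,
    hd, Matrix.mul_assoc]

lemma sum_negmul_le {m : Type*} [Fintype m] (μ : m → ℝ) (h0 : ∀ i, 0 ≤ μ i)
    (h1 : ∑ i, μ i = 1) :
    -∑ i, μ i * Real.log (μ i) ≤ Real.log (Fintype.card m) := by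
  have hne : Nonempty m := by
    by_contra h
    rw [not_nonempty_iff] at h
    rw [Finset.sum_eq_zero (fun i _ => (h.elim i))] at h1
    norm_num at h1
  have hM : (0 : ℝ) < Fintype.card m := by
    have := Fintype.card_pos_iff.mpr hne
    exact_mod_cast this
  set M : ℝ := (Fintype.card m : ℝ) with hMdef
  have jc := Real.concaveOn_negMulLog.le_map_sum (t := Finset.univ)
    (w := fun _ : m => 1 / M) (p := μ)
    (fun i _ => by positivity)
    (by rw [Finset.sum_const, Finset.card_univ, nsmul_eq_mul, ← hMdef]; field_simp)
    (fun i _ => Set.mem_Ici.mpr (h0 i))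
  have hsum : ∑ i, (1 / M) • μ i = 1 / M := by
    rw [← Finset.smul_sum, h1, smul_eq_mul, mul_one]
  rw [hsum] at jc
  have hnm : Real.negMulLog (1 / M) = (1 / M) * Real.log M := by
    rw [Real.negMulLog, one_div, Real.log_inv]
    ring
  rw [hnm] at jc
  have : ∑ i, (1 / M) • Real.negMulLog (μ i) = (1 / M) * ∑ i, Real.negMulLog (μ i) := by
    rw [← Finset.smul_sum]; simp
  rw [this] at jc
  have h2 : ∑ i, Real.negMulLog (μ i) ≤ Real.log M := by
    have := mul_le_mul_of_nonneg_left jc (le_of_lt hM)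
    calc ∑ i, Real.negMulLog (μ i) = M * ((1/M) * ∑ i, Real.negMulLog (μ i)) := by
          field_simp
      _ ≤ M * ((1/M) * Real.log M) := this
      _ = Real.log M := by field_simp
  calc -∑ i, μ i * Real.log (μ i) = ∑ i, Real.negMulLog (μ i) := by
        rw [← Finset.sum_neg_distrib]
        congr 1; funext i; rw [Real.negMulLog]; ring
    _ ≤ Real.log M := h2

lemma sum_negmul_nonneg {m : Type*} [Fintype m] (μ : m → ℝ) (h0 : ∀ i, 0 ≤ μ i)
    (h1 : ∑ i, μ i = 1) : 0 ≤ -∑ i, μ i * Real.log (μ i) := by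
  rw [← Finset.sum_neg_distrib]
  apply Finset.sum_nonneg
  intro i _
  have hle : μ i ≤ 1 := by
    rw [← h1]
    exact Finset.single_le_sum (fun j _ => h0 j) (Finset.mem_univ i)
  have := Real.negMulLog_nonneg (h0 i) hle
  rw [Real.negMulLog] at this
  linarith

lemma unitary_facts {m : Type*} [Fintype m] [DecidableEq m] {A : Matrix m m ℂ}
    (hA : A.IsHermitian) :
    (hA.eigenvectorUnitary : Matrix m m ℂ) * (hA.eigenvectorUnitary : Matrix m m ℂ)ᴴ = 1 ∧
    (hA.eigenvectorUnitary : Matrix m m ℂ)ᴴ * (hA.eigenvectorUnitary : Matrix m m ℂ) = 1 ∧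
    A = (hA.eigenvectorUnitary : Matrix m m ℂ) *
      Matrix.diagonal (fun i => ((hA.eigenvalues i : ℝ) : ℂ)) *
      (hA.eigenvectorUnitary : Matrix m m ℂ)ᴴ := by
  have h1 : (hA.eigenvectorUnitary : Matrix m m ℂ) * (hA.eigenvectorUnitary : Matrix m m ℂ)ᴴ
      = 1 := by
    rw [← Matrix.star_eq_conjTranspose]
    exact (Matrix.mem_unitaryGroup_iff).mp (hA.eigenvectorUnitary).2
  refine ⟨h1, mul_eq_one_comm.mp h1, ?_⟩
  have := hA.spectral_theorem
  rw [Unitary.conjStarAlgAut_apply, Matrix.star_eq_conjTranspose] at this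
  exact this

lemma sum_eig_eq_one {m : Type*} [Fintype m] [DecidableEq m] {A : Matrix m m ℂ}
    (hA : A.IsHermitian) (htr : A.trace = 1) : ∑ i, hA.eigenvalues i = 1 := by
  obtain ⟨h1, h2, h3⟩ := unitary_facts hA
  have ht : A.trace = ∑ j, ((hA.eigenvalues j : ℝ) : ℂ) := by
    conv_lhs => rw [h3]
    rw [Matrix.trace_mul_comm, ← Matrix.mul_assoc, h2, Matrix.one_mul, Matrix.trace_diagonal]
  rw [htr] at ht
  exact_mod_cast ht.symm

lemma arith_case1 (SS TT LL : ℝ) (hL : 0 < LL) (hSS : 0 ≤ SS) (hTT : TT ≤ 2) :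
    (SS + 1 * LL) * (1/2 * TT) / (2 * (1 * LL)) ≤ 1 * (SS * (1/2 * TT) / LL / 2 + 1/2) := by
  simp only [one_mul]
  have h1 : (SS + LL) * (1/2 * TT) / (2*LL) = SS * TT / (4*LL) + TT/4 := by
    field_simp
    ring
  have h2 : SS * (1/2*TT)/LL/2 = SS * TT/(4*LL) := by
    rw [div_div, div_eq_div_iff (by positivity) (by positivity)]
    ring
  rw [h1, h2]
  linarith

lemma arith_case2 (SS TT LL q w : ℝ) (hL : 0 < LL) (hw : 2 ≤ w) (hS0 : 0 ≤ SS)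
    (hSle : SS ≤ w * LL) (hT0 : 0 ≤ TT) (hTle : TT ≤ 2) (hq : 0 ≤ q) :
    (SS + w * LL) * (1/2 * TT) / (2 * (w * LL)) ≤ w * (q / 2 + 1/2) := by
  have hwL : 0 < w * LL := by nlinarith
  have h2 : (SS + w*LL) * (1/2*TT) / (2*(w*LL)) ≤ 1 := by
    rw [div_le_one (by linarith)]
    nlinarith
  have h3 : (1:ℝ) ≤ w * (q/2 + 1/2) := by nlinarith
  linarith

/-- extension of n copies by n maximally mixed states. -/
theorem qscm_copies_mmix_le {N : ℕ} (hN : 2 ≤ N)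
    (ρ : Matrix (Fin N) (Fin N) ℂ) (hρ : ρ.PosSemidef) (htr : ρ.trace = 1)
    (n : ℕ) (hn : 1 ≤ n) :
    qscm (kronPow ρ n ⊗ₖ kronPow (mmix (Fin N)) n) ≤ (n : ℝ) * (qscm ρ / 2 + 1/2) := by
  have hN0 : 0 < N := by omega
  have hNR : (1:ℝ) < N := by exact_mod_cast hN
  have hLpos : 0 < Real.log N := Real.log_pos hNR
  set L : ℝ := Real.log N with hLdef
  -- ρ spectral data
  have hρh : ρ.IsHermitian := hρ.1
  set lam : Fin N → ℝ := hρh.eigenvalues with hlamdef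
  obtain ⟨hWρ1, hWρ2, hρeq⟩ := unitary_facts hρh
  simp only [← hlamdef] at hρeq
  set Wρ : Matrix (Fin N) (Fin N) ℂ := (hρh.eigenvectorUnitary : Matrix (Fin N) (Fin N) ℂ)
    with hWρdef
  have hlam0 : ∀ i, 0 ≤ lam i := fun i => hρ.eigenvalues_nonneg i
  have hlamsum : ∑ i, lam i = 1 := sum_eig_eq_one hρh htr
  -- vNEntropy ρ and diseq ρ
  have hSρ : vNEntropy ρ = -∑ i, lam i * Real.log (lam i) := by
    rw [vNEntropy, dif_pos hρh]
  have hmmixN : mmix (Fin N) = ((N:ℂ))⁻¹ • (1 : Matrix (Fin N) (Fin N) ℂ) := by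
    rw [mmix, Fintype.card_fin]
  have hρmeq : ρ - mmix (Fin N)
      = Wρ * Matrix.diagonal (fun i => ((lam i - 1/(N:ℝ) : ℝ) : ℂ)) * Wρᴴ := by
    rw [hmmixN]
    have hq : ((N:ℂ))⁻¹ • (1 : Matrix (Fin N) (Fin N) ℂ)
        = Wρ * (((N:ℂ))⁻¹ • 1) * Wρᴴ := by
      rw [Matrix.mul_smul, Matrix.mul_one, Matrix.smul_mul, hWρ1]
    conv_lhs => rw [hρeq, hq]
    rw [← Matrix.sub_mul, ← Matrix.mul_sub]
    congr 2
    have hsm : ((N:ℂ))⁻¹ • (1 : Matrix (Fin N) (Fin N) ℂ)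
        = Matrix.diagonal (fun _ => ((N:ℂ))⁻¹) := by
      rw [← Matrix.diagonal_one, ← Matrix.diagonal_smul]
      exact congrArg Matrix.diagonal (funext fun _ => by simp)
    rw [hsm, Matrix.diagonal_sub]
    exact congrArg Matrix.diagonal (funext fun i => by push_cast; ring)
  have hρmherm : (ρ - mmix (Fin N)).IsHermitian := by
    rw [hρmeq]; exact herm_of_unitary_diag Wρ _
  set Tρ : ℝ := ∑ i, |lam i - 1/(N:ℝ)| with hTρdef
  have hDρ : diseq ρ = (1/2) * Tρ := by
    rw [diseq, traceNorm, dif_pos hρmherm]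
    congr 1
    exact eig_sum_eq hρmherm Wρ (fun i => lam i - 1/(N:ℝ)) hWρ1 hWρ2 hρmeq (fun t => |t|)
  have hqρ : qscm ρ = (-∑ i, lam i * Real.log (lam i)) * ((1/2) * Tρ) / L := by
    rw [qscm, hSρ, hDρ, Fintype.card_fin]
  have hSρ0 : 0 ≤ -∑ i, lam i * Real.log (lam i) := sum_negmul_nonneg lam hlam0 hlamsum
  have hTρ0 : 0 ≤ Tρ := Finset.sum_nonneg fun i _ => abs_nonneg _
  have hqρ0 : 0 ≤ qscm ρ := by
    rw [hqρ]
    have : (0:ℝ) ≤ (1/2) * Tρ := by linarith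
    positivity
  -- τ spectral data
  have hτpsd : (kronPow ρ n).PosSemidef := kronPow_posSemidef hρ
  have hτ : (kronPow ρ n).IsHermitian := hτpsd.1
  set μ : (Fin n → Fin N) → ℝ := hτ.eigenvalues with hμdef
  obtain ⟨hW1, hW2, hτeq⟩ := unitary_facts hτ
  simp only [← hμdef] at hτeq
  set W : Matrix (Fin n → Fin N) (Fin n → Fin N) ℂ :=
    (hτ.eigenvectorUnitary : Matrix (Fin n → Fin N) (Fin n → Fin N) ℂ) with hWdef
  have hμ0 : ∀ j, 0 ≤ μ j := fun j => hτpsd.eigenvalues_nonneg j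
  have hτtr : (kronPow ρ n).trace = 1 := by rw [kronPow_trace, htr, one_pow]
  have hμsum : ∑ j, μ j = 1 := sum_eig_eq_one hτ hτtr
  -- cards
  have hcard0 : Fintype.card (Fin n → Fin N) = N ^ n := by
    simp [Fintype.card_fun]
  set M : ℝ := (N:ℝ) ^ n with hMdef
  have hMpos : 0 < M := by positivity
  have hcardR : (Fintype.card (Fin n → Fin N) : ℝ) = M := by
    rw [hcard0]; push_cast; rfl
  -- σ diagonalization
  set U : Matrix ((Fin n → Fin N) × (Fin n → Fin N)) ((Fin n → Fin N) × (Fin n → Fin N)) ℂ :=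
    W ⊗ₖ (1 : Matrix (Fin n → Fin N) (Fin n → Fin N) ℂ) with hUdef
  set d : (Fin n → Fin N) × (Fin n → Fin N) → ℝ := fun p => μ p.1 / M with hddef
  have hsm1 : (((N:ℂ))^n)⁻¹ • (1 : Matrix (Fin n → Fin N) (Fin n → Fin N) ℂ)
      = Matrix.diagonal (fun _ => (((N:ℂ))^n)⁻¹) := by
    rw [← Matrix.diagonal_one, ← Matrix.diagonal_smul]
    exact congrArg Matrix.diagonal (funext fun _ => by simp)
  have hdiag : Matrix.diagonal (fun p => (d p : ℂ))
      = Matrix.diagonal (fun j => ((μ j : ℝ) : ℂ)) ⊗ₖ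
        ((((N:ℂ))^n)⁻¹ • (1 : Matrix (Fin n → Fin N) (Fin n → Fin N) ℂ)) := by
    rw [hsm1, Matrix.diagonal_kronecker_diagonal]
    refine congrArg Matrix.diagonal (funext fun p => ?_)
    show (((μ p.1 / M : ℝ)) : ℂ) = ((μ p.1 : ℝ) : ℂ) * (((N:ℂ))^n)⁻¹
    rw [hMdef]
    push_cast
    ring
  have hσeq : kronPow ρ n ⊗ₖ kronPow (mmix (Fin N)) n
      = U * Matrix.diagonal (fun p => (d p : ℂ)) * Uᴴ := by
    rw [hdiag, hUdef, kron_conjTranspose, Matrix.conjTranspose_one,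
      ← Matrix.mul_kronecker_mul, ← Matrix.mul_kronecker_mul,
      Matrix.one_mul, Matrix.mul_one, kronPow_mmix hN0, hτeq]
  have hU1 : U * Uᴴ = 1 := by
    rw [hUdef, kron_conjTranspose, Matrix.conjTranspose_one, ← Matrix.mul_kronecker_mul,
      hW1, Matrix.one_mul, Matrix.one_kronecker_one]
  have hU2 : Uᴴ * U = 1 := mul_eq_one_comm.mp hU1
  have hσherm : (kronPow ρ n ⊗ₖ kronPow (mmix (Fin N)) n).IsHermitian := by
    rw [hσeq]; exact herm_of_unitary_diag U d
  -- entropy of σ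
  set S0 : ℝ := -∑ j, μ j * Real.log (μ j) with hS0def
  have hvN : vNEntropy (kronPow ρ n ⊗ₖ kronPow (mmix (Fin N)) n) = S0 + Real.log M := by
    rw [vNEntropy, dif_pos hσherm]
    rw [eig_sum_eq hσherm U d hU1 hU2 hσeq (fun t => t * Real.log t)]
    rw [Fintype.sum_prod_type]
    have hterm : ∀ j : Fin n → Fin N,
        ∑ _k : Fin n → Fin N, d (j, _k) * Real.log (d (j, _k))
        = μ j * Real.log (μ j) - μ j * Real.log M := by
      intro j
      show ∑ _k : Fin n → Fin N, (μ j / M) * Real.log (μ j / M) = _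
      rw [Finset.sum_const, Finset.card_univ, nsmul_eq_mul, hcardR]
      rcases eq_or_lt_of_le (hμ0 j) with h | h
      · rw [← h]; simp
      · rw [Real.log_div (ne_of_gt h) (ne_of_gt hMpos)]
        field_simp
    rw [Finset.sum_congr rfl (fun j _ => hterm j), Finset.sum_sub_distrib, ← Finset.sum_mul,
      hμsum, hS0def]
    ring
  -- trace norm of σ - mmix
  set d' : (Fin n → Fin N) × (Fin n → Fin N) → ℝ := fun p => d p - 1/(M^2) with hd'def
  have hcardP : ((Fintype.card ((Fin n → Fin N) × (Fin n → Fin N))) : ℂ) = ((M^2 : ℝ) : ℂ) := by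
    rw [Fintype.card_prod, hcard0, hMdef]
    push_cast
    ring
  have hAeq2 : kronPow ρ n ⊗ₖ kronPow (mmix (Fin N)) n
        - mmix ((Fin n → Fin N) × (Fin n → Fin N))
      = U * Matrix.diagonal (fun p => (d' p : ℂ)) * Uᴴ := by
    rw [show mmix ((Fin n → Fin N) × (Fin n → Fin N))
        = ((Fintype.card ((Fin n → Fin N) × (Fin n → Fin N)) : ℂ))⁻¹ • 1 from rfl, hcardP]
    have hq : (((M^2 : ℝ) : ℂ))⁻¹ • (1 : Matrix ((Fin n → Fin N) × (Fin n → Fin N)) _ ℂ)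
        = U * ((((M^2 : ℝ) : ℂ))⁻¹ • 1) * Uᴴ := by
      rw [Matrix.mul_smul, Matrix.mul_one, Matrix.smul_mul, hU1]
    rw [hσeq, hq, ← Matrix.sub_mul, ← Matrix.mul_sub]
    congr 2
    have hsm : (((M^2 : ℝ) : ℂ))⁻¹ • (1 : Matrix ((Fin n → Fin N) × (Fin n → Fin N)) _ ℂ)
        = Matrix.diagonal (fun _ => (((M^2 : ℝ) : ℂ))⁻¹) := by
      rw [← Matrix.diagonal_one, ← Matrix.diagonal_smul]
      exact congrArg Matrix.diagonal (funext fun _ => by simp)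
    rw [hsm, Matrix.diagonal_sub]
    refine congrArg Matrix.diagonal (funext fun p => ?_)
    show ((d p : ℝ) : ℂ) - (((M^2 : ℝ) : ℂ))⁻¹ = ((d p - 1/(M^2) : ℝ) : ℂ)
    push_cast
    ring
  have hAherm : (kronPow ρ n ⊗ₖ kronPow (mmix (Fin N)) n
      - mmix ((Fin n → Fin N) × (Fin n → Fin N))).IsHermitian := by
    rw [hAeq2]; exact herm_of_unitary_diag U d'
  set T : ℝ := ∑ j, |μ j - 1/M| with hTdef
  have hDσ : diseq (kronPow ρ n ⊗ₖ kronPow (mmix (Fin N)) n) = (1/2) * T := by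
    rw [diseq, traceNorm, dif_pos hAherm]
    congr 1
    rw [eig_sum_eq hAherm U d' hU1 hU2 hAeq2 (fun t => |t|)]
    rw [Fintype.sum_prod_type]
    rw [hTdef]
    apply Finset.sum_congr rfl
    intro j _
    show ∑ _k : Fin n → Fin N, |μ j / M - 1/(M^2)| = _
    rw [Finset.sum_const, Finset.card_univ, nsmul_eq_mul, hcardR]
    have hval : M * (μ j / M - 1/(M^2)) = μ j - 1/M := by
      field_simp
    calc M * |μ j / M - 1/(M^2)| = |M * (μ j / M - 1/(M^2))| := by
          rw [abs_mul, abs_of_pos hMpos]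
      _ = |μ j - 1/M| := by rw [hval]
  -- qscm of σ
  have hlogcard : Real.log (Fintype.card ((Fin n → Fin N) × (Fin n → Fin N))) = 2 * ((n:ℝ) * L) := by
    rw [Fintype.card_prod, hcard0]
    have hx : (0:ℝ) < (N:ℝ)^n := by positivity
    push_cast
    rw [Real.log_mul (ne_of_gt hx) (ne_of_gt hx), Real.log_pow, hLdef]
    ring
  have hqσ : qscm (kronPow ρ n ⊗ₖ kronPow (mmix (Fin N)) n)
      = (S0 + Real.log M) * ((1/2) * T) / (2 * ((n:ℝ) * L)) := by
    rw [qscm, hvN, hDσ, hlogcard]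
  -- bounds
  have hlogM : Real.log M = (n:ℝ) * L := by rw [hMdef, Real.log_pow, hLdef]
  have hS00 : 0 ≤ S0 := sum_negmul_nonneg μ hμ0 hμsum
  have hS0le : S0 ≤ (n:ℝ) * L := by
    have h := sum_negmul_le μ hμ0 hμsum
    rwa [hcardR, hlogM] at h
  have hT0 : 0 ≤ T := Finset.sum_nonneg fun j _ => abs_nonneg _
  have hTle : T ≤ 2 := by
    have h1 : T ≤ ∑ j, (μ j + 1/M) := by
      apply Finset.sum_le_sum
      intro j _
      calc |μ j - 1/M| ≤ |μ j| + |1/M| := abs_sub _ _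
        _ = μ j + 1/M := by
            rw [abs_of_nonneg (hμ0 j), abs_of_pos (by positivity)]
    have h2 : ∑ j, (μ j + 1/M) = 2 := by
      rw [Finset.sum_add_distrib, hμsum, Finset.sum_const, Finset.card_univ, nsmul_eq_mul,
        hcardR]
      field_simp
      norm_num
    linarith
  rw [hqσ]
  rcases eq_or_lt_of_le hn with h1 | h2
  · -- n = 1
    subst h1
    -- bridge between μ and lam
    set Ub : Matrix (Fin 1 → Fin N) (Fin N) ℂ := Wρ.submatrix (fun x => x 0) id with hUbdef
    have hxy : ∀ x y : Fin 1 → Fin N, x 0 = y 0 → x = y := by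
      intro x y h
      funext i
      rw [Subsingleton.elim i 0]
      exact h
    have hUb1 : Ub * Ubᴴ = 1 := by
      ext x y
      rw [Matrix.mul_apply]
      have hk : ∀ k, Ub x k * Ubᴴ k y = Wρ (x 0) k * Wρᴴ k (y 0) := fun k => rfl
      simp_rw [hk]
      rw [← Matrix.mul_apply, hWρ1]
      by_cases h : x = y
      · rw [h, Matrix.one_apply_eq, Matrix.one_apply_eq]
      · rw [Matrix.one_apply_ne (fun hc => h (hxy x y hc)), Matrix.one_apply_ne h]
    have hUb2 : Ubᴴ * Ub = 1 := by
      ext k l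
      rw [Matrix.mul_apply]
      have hk : ∀ x : Fin 1 → Fin N, Ubᴴ k x * Ub x l = Wρᴴ k (x 0) * Wρ (x 0) l :=
        fun x => rfl
      simp_rw [hk]
      have hsum : (∑ x : Fin 1 → Fin N, Wρᴴ k (x 0) * Wρ (x 0) l)
          = ∑ j : Fin N, Wρᴴ k j * Wρ j l := by
        apply Fintype.sum_equiv (Equiv.funUnique (Fin 1) (Fin N))
        intro x
        have : (Equiv.funUnique (Fin 1) (Fin N)) x = x 0 := by
          show x default = x 0
          rw [Subsingleton.elim (default : Fin 1) 0]
        rw [this]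
      rw [hsum, ← Matrix.mul_apply, hWρ2]
    have hτeqb : kronPow ρ 1 = Ub * Matrix.diagonal (fun i => ((lam i : ℝ) : ℂ)) * Ubᴴ := by
      ext x y
      have hre : (Ub * Matrix.diagonal (fun i => ((lam i : ℝ) : ℂ)) * Ubᴴ) x y
          = (Wρ * Matrix.diagonal (fun i => ((lam i : ℝ) : ℂ)) * Wρᴴ) (x 0) (y 0) := by
        rw [Matrix.mul_apply, Matrix.mul_apply]
        apply Finset.sum_congr rfl
        intro l _
        have e1 : (Ub * Matrix.diagonal (fun i => ((lam i : ℝ) : ℂ))) x l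
            = (Wρ * Matrix.diagonal (fun i => ((lam i : ℝ) : ℂ))) (x 0) l := by
          rw [Matrix.mul_apply, Matrix.mul_apply]
          rfl
        have e2 : Ubᴴ l y = Wρᴴ l (y 0) := rfl
        rw [e1, e2]
      rw [hre, ← hρeq]
      show ∏ i : Fin 1, ρ (x i) (y i) = ρ (x 0) (y 0)
      exact Fin.prod_univ_one _
    have hbridge : ∀ f : ℝ → ℝ, ∑ j, f (μ j) = ∑ i, f (lam i) :=
      fun f => eig_sum_eq hτ Ub lam hUb1 hUb2 hτeqb f
    have hS0ρ : S0 = -∑ i, lam i * Real.log (lam i) := by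
      rw [hS0def]
      congr 1
      exact hbridge (fun t => t * Real.log t)
    have hM1 : M = (N:ℝ) := by rw [hMdef, pow_one]
    have hTT : T = Tρ := by
      rw [hTdef, hTρdef, hM1]
      exact hbridge (fun t => |t - 1/(N:ℝ)|)
    have hTρ2 : Tρ ≤ 2 := by rw [← hTT]; exact hTle
    rw [hqρ, hS0ρ, hlogM, hTT, Nat.cast_one]
    exact arith_case1 _ _ _ hLpos hSρ0 hTρ2
  · -- n ≥ 2
    have hn2 : (2:ℝ) ≤ (n:ℝ) := by exact_mod_cast h2
    rw [hlogM]
    exact arith_case2 S0 T L (qscm ρ) (n:ℝ) hLpos hn2 hS00 hS0le hT0 hTle hqρ0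

end Helpers
end

section
/- Closed expression for the one-qubit quantum statistical complexity: for a one-qubit density matrix ρ = (1/2)(I + x·σˣ + y·σʸ + z·σᶻ) with Bloch vector length r = √(x² + y² + z²) satisfying 0 ≤ r < 1, the product of the von Neumann entropy and the disequilibrium equals S(ρ)·D(ρ, I/2) = −(r²/2)·arctanh(r) − (r/4)·log((1 − r²)/4) (natural logarithm); equivalently, the quantum statistical complexity is C(ρ) = [−(r²/2)·arctanh(r) − (r/4)·log((1 − r²)/4)] / log 2, a function of r alone. -/
open Matrix BigOperators Kronecker ComplexOrder

/-- The inverse hyperbolic tangent. -/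
noncomputable def arctanh (x : ℝ) : ℝ := (1/2) * Real.log ((1 + x) / (1 - x))

noncomputable def pauliX : Matrix (Fin 2) (Fin 2) ℂ := !![0, 1; 1, 0]
noncomputable def pauliY : Matrix (Fin 2) (Fin 2) ℂ := !![0, -Complex.I; Complex.I, 0]
noncomputable def pauliZ : Matrix (Fin 2) (Fin 2) ℂ := !![1, 0; 0, -1]

noncomputable def blochState (x y z : ℝ) : Matrix (Fin 2) (Fin 2) ℂ :=
  (1/2 : ℂ) • ((1 : Matrix (Fin 2) (Fin 2) ℂ) + (x : ℂ) • pauliX + (y : ℂ) • pauliY + (z : ℂ) • pauliZ)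

lemma trace_eq_sum_ev {n : Type*} [Fintype n] [DecidableEq n] {A : Matrix n n ℂ}
    (h : A.IsHermitian) : A.trace = ∑ i, (h.eigenvalues i : ℂ) := by
  conv_lhs => rw [h.spectral_theorem, Unitary.conjStarAlgAut_apply]
  rw [Matrix.trace_mul_comm, ← mul_assoc]
  rw [Unitary.coe_star_mul_self]
  simp [Matrix.trace_diagonal]

lemma det_eq_prod_ev {n : Type*} [Fintype n] [DecidableEq n] {A : Matrix n n ℂ}
    (h : A.IsHermitian) : A.det = ∏ i, (h.eigenvalues i : ℂ) :=
  h.det_eq_prod_eigenvalues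

lemma bloch_eq (x y z : ℝ) : blochState x y z =
    !![((1+z : ℂ))/2, (x - y*Complex.I)/2; (x + y*Complex.I)/2, (1-z)/2] := by
  ext i j
  fin_cases i <;> fin_cases j <;>
    simp [blochState, pauliX, pauliY, pauliZ, Matrix.one_apply] <;> ring

lemma bloch_sub_eq (x y z : ℝ) : blochState x y z - mmix (Fin 2) =
    !![((z:ℂ))/2, (x - y*Complex.I)/2; (x + y*Complex.I)/2, -z/2] := by
  rw [bloch_eq]
  ext i j
  fin_cases i <;> fin_cases j <;>
    simp [mmix, Matrix.one_apply] <;> ring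

lemma bloch_herm (x y z : ℝ) : (blochState x y z).IsHermitian := by
  rw [bloch_eq]
  unfold Matrix.IsHermitian
  ext i j
  fin_cases i <;> fin_cases j <;>
    simp [Matrix.conjTranspose_apply, Complex.ext_iff]

lemma bloch_sub_herm (x y z : ℝ) : (blochState x y z - mmix (Fin 2)).IsHermitian := by
  rw [bloch_sub_eq]
  unfold Matrix.IsHermitian
  ext i j
  fin_cases i <;> fin_cases j <;>
    simp [Matrix.conjTranspose_apply, Complex.ext_iff]

/-- closed expression for the one-qubit quantum statistical complexity. -/
theorem qscm_one_qubit (x y z r : ℝ) (hr : r = Real.sqrt (x^2 + y^2 + z^2)) (h1 : r < 1) :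
    vNEntropy (blochState x y z) * diseq (blochState x y z) =
      -(r^2/2) * arctanh r - (r/4) * Real.log ((1 - r^2)/4) ∧
    qscm (blochState x y z) =
      (-(r^2/2) * arctanh r - (r/4) * Real.log ((1 - r^2)/4)) / Real.log 2 := by
  have hr0 : 0 ≤ r := hr ▸ Real.sqrt_nonneg _
  have hr2 : r^2 = x^2 + y^2 + z^2 := by
    rw [hr, Real.sq_sqrt (by positivity)]
  have hh := bloch_herm x y z
  have hd := bloch_sub_herm x y z
  have hI : Complex.I ^ 2 = -1 := Complex.I_sq
  -- trace and det of blochState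
  have htrace : (blochState x y z).trace = 1 := by
    rw [bloch_eq, Matrix.trace_fin_two_of]; push_cast; ring
  have hdetc : (blochState x y z).det = (((1 - r^2)/4 : ℝ) : ℂ) := by
    rw [bloch_eq, Matrix.det_fin_two_of]
    push_cast [hr2]
    linear_combination ((y:ℂ)^2/4) * hI
  have htr : hh.eigenvalues 0 + hh.eigenvalues 1 = 1 := by
    have h2 := (trace_eq_sum_ev hh).symm.trans htrace
    rw [Fin.sum_univ_two] at h2
    exact_mod_cast h2
  have hdet : hh.eigenvalues 0 * hh.eigenvalues 1 = (1 - r^2)/4 := by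
    have h2 := (det_eq_prod_ev hh).symm.trans hdetc
    rw [Fin.prod_univ_two] at h2
    exact_mod_cast h2
  -- trace and det of blochState - mmix
  have htrace' : (blochState x y z - mmix (Fin 2)).trace = 0 := by
    rw [bloch_sub_eq, Matrix.trace_fin_two_of]; push_cast; ring
  have hdetc' : (blochState x y z - mmix (Fin 2)).det = ((-(r^2)/4 : ℝ) : ℂ) := by
    rw [bloch_sub_eq, Matrix.det_fin_two_of]
    push_cast [hr2]
    linear_combination ((y:ℂ)^2/4) * hI
  have htr' : hd.eigenvalues 0 + hd.eigenvalues 1 = 0 := by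
    have h2 := (trace_eq_sum_ev hd).symm.trans htrace'
    rw [Fin.sum_univ_two] at h2
    exact_mod_cast h2
  have hdet' : hd.eigenvalues 0 * hd.eigenvalues 1 = -(r^2)/4 := by
    have h2 := (det_eq_prod_ev hd).symm.trans hdetc'
    rw [Fin.prod_univ_two] at h2
    exact_mod_cast h2
  -- disequilibrium = r/2
  have hsq : hd.eigenvalues 0 ^ 2 = (r/2)^2 := by linear_combination hd.eigenvalues 0 * htr' - hdet'
  have habs : |hd.eigenvalues 0| = r/2 := by
    rw [← Real.sqrt_sq_eq_abs, hsq, Real.sqrt_sq (by linarith)]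
  have hdis : diseq (blochState x y z) = r/2 := by
    have hμ1 : hd.eigenvalues 1 = -hd.eigenvalues 0 := by linarith
    rw [diseq, traceNorm, dif_pos hd, Fin.sum_univ_two, hμ1, abs_neg, habs]
    ring
  -- entropy
  have hp1 : (0:ℝ) < 1 + r := by linarith
  have hm1 : (0:ℝ) < 1 - r := by linarith
  have hent : vNEntropy (blochState x y z) =
      -((1+r)/2 * Real.log ((1+r)/2) + (1-r)/2 * Real.log ((1-r)/2)) := by
    have key : (hh.eigenvalues 0 - (1+r)/2) * (hh.eigenvalues 0 - (1-r)/2) = 0 := by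
      linear_combination (hh.eigenvalues 0) * htr - hdet
    rw [vNEntropy, dif_pos hh, Fin.sum_univ_two]
    rcases mul_eq_zero.mp key with h | h
    · have h0 : hh.eigenvalues 0 = (1+r)/2 := by linarith
      have h1' : hh.eigenvalues 1 = (1-r)/2 := by linarith
      rw [h0, h1']
    · have h0 : hh.eigenvalues 0 = (1-r)/2 := by linarith
      have h1' : hh.eigenvalues 1 = (1+r)/2 := by linarith
      rw [h0, h1']; ring
  -- final algebra
  have hlog4 : Real.log ((1 - r^2)/4) = Real.log ((1+r)/2) + Real.log ((1-r)/2) := by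
    have h4 : (1 - r^2)/4 = ((1+r)/2) * ((1-r)/2) := by ring
    rw [h4, Real.log_mul (by positivity) (by positivity)]
  have harct : arctanh r = (1/2) * (Real.log ((1+r)/2) - Real.log ((1-r)/2)) := by
    rw [arctanh]
    have h5 : (1 + r)/(1 - r) = ((1+r)/2) / ((1-r)/2) := by
      field_simp
    rw [h5, Real.log_div (by positivity) (by positivity)]
  have main : vNEntropy (blochState x y z) * diseq (blochState x y z) =
      -(r^2/2) * arctanh r - (r/4) * Real.log ((1 - r^2)/4) := by
    rw [hent, hdis, hlog4, harct]; ring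
  refine ⟨main, ?_⟩
  rw [qscm, main]
  norm_num
end
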